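/- arXiv:2403.09650 — 7 statements merged into one kernel-verified Lean document; each statement's English description precedes it below -/
import Mathlib

section
/- Let $\{u_i\}_{i=0}^{n}$ be any sequence of real numbers with $u_0 = 0$, and let $\lambda_1, \lambda_2 \geq 1$ be real numbers. Then $\sum_{i=1}^{n} |u_i|^{\lambda_1} |u_i - u_{i-1}|^{\lambda_2} \leq \frac{\lambda_2 (n+1)^{\lambda_1}}{\lambda_1 + \lambda_2} \sum_{i=1}^{n} |u_i - u_{i-1}|^{\lambda_1 + \lambda_2}$. -/
open Finset

theorem discrete_opial_abs
    (n : ℕ) (u : ℕ → ℝ) (l1 l2 : ℝ)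
    (hl1 : 1 ≤ l1) (hl2 : 1 ≤ l2)
    (h0 : u 0 = 0) :
    ∑ i ∈ Finset.Icc 1 n, |u i| ^ l1 * |u i - u (i - 1)| ^ l2
      ≤ (l2 * ((n : ℝ) + 1) ^ l1) / (l1 + l2) *
        ∑ i ∈ Finset.Icc 1 n, |u i - u (i - 1)| ^ (l1 + l2) := by
  have hl1p : (0:ℝ) < l1 := lt_of_lt_of_le one_pos hl1
  have hl2p : (0:ℝ) < l2 := lt_of_lt_of_le one_pos hl2
  have hLp : (0:ℝ) < l1 + l2 := by linarith
  set d : ℕ → ℝ := fun i => |u i - u (i - 1)| with hd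
  have hdnn : ∀ i, 0 ≤ d i := fun i => abs_nonneg _
  set e : ℕ → ℝ := fun i => d i ^ (l1 + l2) with he
  have henn : ∀ i, 0 ≤ e i := fun i => Real.rpow_nonneg (hdnn i) _
  -- telescoping bound
  have hA : ∀ i, |u i| ≤ ∑ j ∈ Icc 1 i, d j := by
    intro i
    induction i with
    | zero => simp [h0]
    | succ k ih =>
      have hstep : |u (k+1)| ≤ |u k| + d (k+1) := by
        have h1 : u (k+1) = u k + (u (k+1) - u k) := by ring
        calc |u (k+1)| = |u k + (u (k+1) - u k)| := by rw [← h1]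
          _ ≤ |u k| + |u (k+1) - u k| := abs_add_le _ _
          _ = |u k| + d (k+1) := by simp [hd]
      rw [Finset.sum_Icc_succ_top (by omega : 1 ≤ k+1)]
      linarith
  -- Bernoulli-type inequality
  have hBern : ∀ x : ℝ, 1 ≤ x → l1 * x ^ (l1 - 1) ≤ (x + 1) ^ l1 - x ^ l1 := by
    intro x hx
    have hxp : (0:ℝ) < x := lt_of_lt_of_le one_pos hx
    have h0x : (0:ℝ) ≤ 1/x := by positivity
    have h1 : 1 + l1 * (1/x) ≤ (1 + 1/x) ^ l1 :=
      one_add_mul_self_le_rpow_one_add (by linarith) hl1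
    have e1 : x ^ (l1 - 1) = x ^ l1 / x := by
      rw [Real.rpow_sub hxp, Real.rpow_one]
    have e2 : (x + 1) ^ l1 = x ^ l1 * (1 + 1/x) ^ l1 := by
      rw [← Real.mul_rpow hxp.le (by positivity)]
      congr 1
      field_simp
    have h2 := mul_le_mul_of_nonneg_left h1 (Real.rpow_nonneg hxp.le l1)
    have h3 : x ^ l1 * (1 + l1 * (1/x)) = x ^ l1 + l1 * (x ^ l1 / x) := by
      field_simp
    rw [e1, e2]
    rw [h3] at h2
    linarith
  -- summation of Bernoulli bounds
  have hsum : ∀ m j : ℕ, 1 ≤ j → j ≤ m + 1 →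
      ∑ i ∈ Icc j m, l1 * (i:ℝ) ^ (l1 - 1) ≤ ((m:ℝ) + 1) ^ l1 - (j:ℝ) ^ l1 := by
    intro m
    induction m with
    | zero =>
      intro j hj1 hj2
      have hj : j = 1 := by omega
      subst hj
      rw [Finset.Icc_eq_empty (by omega)]
      norm_num [Real.one_rpow]
    | succ m ih =>
      intro j hj1 hj2
      by_cases hj : j ≤ m + 1
      · rw [Finset.sum_Icc_succ_top hj]
        have ih' := ih j hj1 hj
        have hm1 : (1:ℝ) ≤ (m:ℝ) + 1 := by
          have : (0:ℝ) ≤ (m:ℝ) := Nat.cast_nonneg m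
          linarith
        have hb := hBern ((m:ℝ) + 1) hm1
        push_cast
        linarith
      · have hj' : j = m + 2 := by omega
        subst hj'
        rw [Finset.Icc_eq_empty (by omega)]
        simp only [Finset.sum_empty]
        push_cast
        have heq : (m:ℝ) + 1 + 1 = (m:ℝ) + 2 := by ring
        rw [heq]
        simp
  -- power mean inequality
  have hPM : ∀ i : ℕ, 1 ≤ i →
      (∑ j ∈ Icc 1 i, d j) ^ l1 ≤ (i:ℝ) ^ (l1 - 1) * ∑ j ∈ Icc 1 i, d j ^ l1 := by
    intro i hi1
    have hipos : (0:ℝ) < (i:ℝ) := by exact_mod_cast hi1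
    have hcard : (Icc 1 i).card = i := by rw [Nat.card_Icc]; omega
    have h := Real.rpow_arith_mean_le_arith_mean_rpow (Icc 1 i)
      (fun _ => (i:ℝ)⁻¹) d (fun j _ => by positivity)
      (by simp only [Finset.sum_const, hcard, nsmul_eq_mul]; field_simp)
      (fun j _ => hdnn j) hl1
    rw [← Finset.mul_sum, ← Finset.mul_sum,
      Real.mul_rpow (by positivity) (Finset.sum_nonneg fun j _ => hdnn j)] at h
    have h2 := mul_le_mul_of_nonneg_left h (Real.rpow_nonneg hipos.le l1)
    have e3 : (i:ℝ) ^ l1 * ((i:ℝ)⁻¹ ^ l1 * (∑ j ∈ Icc 1 i, d j) ^ l1)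
        = (∑ j ∈ Icc 1 i, d j) ^ l1 := by
      rw [Real.inv_rpow hipos.le,
        mul_inv_cancel_left₀ (by positivity : ((i:ℝ) ^ l1) ≠ 0)]
    have e4 : (i:ℝ) ^ l1 * ((i:ℝ)⁻¹ * ∑ j ∈ Icc 1 i, d j ^ l1)
        = (i:ℝ) ^ (l1 - 1) * ∑ j ∈ Icc 1 i, d j ^ l1 := by
      rw [Real.rpow_sub hipos, Real.rpow_one]
      ring
    rw [e3, e4] at h2
    exact h2
  -- Young's inequality
  have hY : ∀ a b : ℝ, 0 ≤ a → 0 ≤ b →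
      a ^ l1 * b ^ l2 ≤ l1 / (l1 + l2) * a ^ (l1 + l2) + l2 / (l1 + l2) * b ^ (l1 + l2) := by
    intro a b ha hb
    have hpq : Real.HolderConjugate ((l1 + l2) / l1) ((l1 + l2) / l2) := by
      rw [Real.holderConjugate_iff]
      constructor
      · rw [lt_div_iff₀ hl1p]; linarith
      · rw [inv_div, inv_div, ← add_div, div_self hLp.ne']
    have h := Real.young_inequality_of_nonneg (Real.rpow_nonneg ha l1)
      (Real.rpow_nonneg hb l2) hpq
    rw [← Real.rpow_mul ha, ← Real.rpow_mul hb] at h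
    have e1 : l1 * ((l1 + l2) / l1) = l1 + l2 := by field_simp
    have e2 : l2 * ((l1 + l2) / l2) = l1 + l2 := by field_simp
    rw [e1, e2] at h
    calc a ^ l1 * b ^ l2
        ≤ a ^ (l1+l2) / ((l1+l2)/l1) + b ^ (l1+l2) / ((l1+l2)/l2) := h
      _ = l1 / (l1 + l2) * a ^ (l1 + l2) + l2 / (l1 + l2) * b ^ (l1 + l2) := by
          rw [div_div_eq_mul_div, div_div_eq_mul_div]; ring
  -- main chain
  have main : ∑ i ∈ Icc 1 n, |u i| ^ l1 * d i ^ l2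
      ≤ (∑ i ∈ Icc 1 n, ∑ j ∈ Icc 1 i, (i:ℝ) ^ (l1-1) * (l1/(l1+l2)) * e j)
        + ∑ i ∈ Icc 1 n, (i:ℝ) ^ l1 * (l2/(l1+l2)) * e i := by
    rw [← Finset.sum_add_distrib]
    apply Finset.sum_le_sum
    intro i hi
    have hi1 : 1 ≤ i := (Finset.mem_Icc.mp hi).1
    have hipos : (0:ℝ) < (i:ℝ) := by exact_mod_cast hi1
    have hcard : (Icc 1 i).card = i := by rw [Nat.card_Icc]; omega
    have h1 : |u i| ^ l1 ≤ (i:ℝ) ^ (l1-1) * ∑ j ∈ Icc 1 i, d j ^ l1 := by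
      calc |u i| ^ l1 ≤ (∑ j ∈ Icc 1 i, d j) ^ l1 :=
            Real.rpow_le_rpow (abs_nonneg _) (hA i) hl1p.le
        _ ≤ _ := hPM i hi1
    have hpow : (i:ℝ) * (i:ℝ) ^ (l1-1) = (i:ℝ) ^ l1 := by
      rw [Real.rpow_sub hipos, Real.rpow_one]
      field_simp
    calc |u i| ^ l1 * d i ^ l2
        ≤ ((i:ℝ) ^ (l1-1) * ∑ j ∈ Icc 1 i, d j ^ l1) * d i ^ l2 :=
          mul_le_mul_of_nonneg_right h1 (Real.rpow_nonneg (hdnn i) l2)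
      _ = ∑ j ∈ Icc 1 i, (i:ℝ) ^ (l1-1) * (d j ^ l1 * d i ^ l2) := by
          rw [Finset.mul_sum, Finset.sum_mul]
          exact Finset.sum_congr rfl fun j _ => by ring
      _ ≤ ∑ j ∈ Icc 1 i, (i:ℝ) ^ (l1-1) * (l1/(l1+l2) * e j + l2/(l1+l2) * e i) := by
          apply Finset.sum_le_sum
          intro j _
          exact mul_le_mul_of_nonneg_left (hY (d j) (d i) (hdnn j) (hdnn i))
            (Real.rpow_nonneg hipos.le _)
      _ = (∑ j ∈ Icc 1 i, (i:ℝ) ^ (l1-1) * (l1/(l1+l2)) * e j)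
            + (i:ℝ) ^ l1 * (l2/(l1+l2)) * e i := by
          have hsplit : ∑ j ∈ Icc 1 i, (i:ℝ) ^ (l1-1) * (l1/(l1+l2) * e j + l2/(l1+l2) * e i)
              = (∑ j ∈ Icc 1 i, (i:ℝ) ^ (l1-1) * (l1/(l1+l2)) * e j)
                + ∑ j ∈ Icc 1 i, (i:ℝ) ^ (l1-1) * (l2/(l1+l2) * e i) := by
            rw [← Finset.sum_add_distrib]
            exact Finset.sum_congr rfl fun j _ => by ring
          rw [hsplit, Finset.sum_const, hcard, nsmul_eq_mul]
          rw [show (i:ℝ) * ((i:ℝ) ^ (l1-1) * (l2/(l1+l2) * e i))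
              = ((i:ℝ) * (i:ℝ) ^ (l1-1)) * (l2/(l1+l2) * e i) from by ring, hpow]
          ring
  -- swap the double sum
  have hswap : (∑ i ∈ Icc 1 n, ∑ j ∈ Icc 1 i, (i:ℝ) ^ (l1-1) * (l1/(l1+l2)) * e j)
      = ∑ j ∈ Icc 1 n, ∑ i ∈ Icc j n, (i:ℝ) ^ (l1-1) * (l1/(l1+l2)) * e j :=
    Finset.sum_comm' (fun i j => by simp only [Finset.mem_Icc]; omega)
  -- conclude
  calc ∑ i ∈ Icc 1 n, |u i| ^ l1 * d i ^ l2
      ≤ (∑ i ∈ Icc 1 n, ∑ j ∈ Icc 1 i, (i:ℝ) ^ (l1-1) * (l1/(l1+l2)) * e j)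
        + ∑ i ∈ Icc 1 n, (i:ℝ) ^ l1 * (l2/(l1+l2)) * e i := main
    _ = ∑ j ∈ Icc 1 n, ((∑ i ∈ Icc j n, (i:ℝ) ^ (l1-1) * (l1/(l1+l2)) * e j)
          + (j:ℝ) ^ l1 * (l2/(l1+l2)) * e j) := by
        rw [hswap, ← Finset.sum_add_distrib]
    _ ≤ ∑ j ∈ Icc 1 n, (l2 * ((n:ℝ) + 1) ^ l1) / (l1 + l2) * e j := by
        apply Finset.sum_le_sum
        intro j hj
        obtain ⟨hj1, hjn⟩ := Finset.mem_Icc.mp hj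
        have hjle : (j:ℝ) ≤ (n:ℝ) + 1 := by
          have : (j:ℝ) ≤ (n:ℝ) := by exact_mod_cast hjn
          linarith
        have hjr : (j:ℝ) ^ l1 ≤ ((n:ℝ) + 1) ^ l1 :=
          Real.rpow_le_rpow (Nat.cast_nonneg j) hjle hl1p.le
        have hs := hsum n j hj1 (by omega)
        have hinner : ∑ i ∈ Icc j n, (i:ℝ) ^ (l1-1) * (l1/(l1+l2)) * e j
            ≤ (((n:ℝ) + 1) ^ l1 - (j:ℝ) ^ l1) * (e j / (l1+l2)) := by
          calc ∑ i ∈ Icc j n, (i:ℝ) ^ (l1-1) * (l1/(l1+l2)) * e j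
              = (∑ i ∈ Icc j n, l1 * (i:ℝ) ^ (l1-1)) * (e j / (l1+l2)) := by
                rw [Finset.sum_mul]
                exact Finset.sum_congr rfl fun i _ => by ring
            _ ≤ (((n:ℝ) + 1) ^ l1 - (j:ℝ) ^ l1) * (e j / (l1+l2)) :=
                mul_le_mul_of_nonneg_right hs (by positivity)
        have hkey : (((n:ℝ) + 1) ^ l1 - (j:ℝ) ^ l1) * (e j / (l1+l2))
            + (j:ℝ) ^ l1 * (l2/(l1+l2)) * e j
            ≤ (l2 * ((n:ℝ) + 1) ^ l1) / (l1 + l2) * e j := by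
          have hnum : ((((n:ℝ) + 1) ^ l1 - (j:ℝ) ^ l1) + (j:ℝ) ^ l1 * l2) * e j
              ≤ (l2 * ((n:ℝ) + 1) ^ l1) * e j := by
            nlinarith [mul_nonneg (mul_nonneg (by linarith : (0:ℝ) ≤ l2 - 1)
              (by linarith : (0:ℝ) ≤ ((n:ℝ) + 1) ^ l1 - (j:ℝ) ^ l1)) (henn j)]
          calc (((n:ℝ) + 1) ^ l1 - (j:ℝ) ^ l1) * (e j / (l1+l2))
              + (j:ℝ) ^ l1 * (l2/(l1+l2)) * e j
              = ((((n:ℝ) + 1) ^ l1 - (j:ℝ) ^ l1) + (j:ℝ) ^ l1 * l2) * e j / (l1+l2) := by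
                ring
            _ ≤ (l2 * ((n:ℝ) + 1) ^ l1) * e j / (l1+l2) := by gcongr
            _ = (l2 * ((n:ℝ) + 1) ^ l1) / (l1 + l2) * e j := by ring
        linarith
    _ = (l2 * ((n:ℝ) + 1) ^ l1) / (l1 + l2) * ∑ j ∈ Icc 1 n, e j := by
        rw [Finset.mul_sum]
end

section
/- Let $\{u_i\}_{i=n}^{m}$ be a sequence of real numbers with $u_m = 0$, and let $\lambda_1, \lambda_2 \geq 1$ be real numbers. Then $\sum_{i=n}^{m-1} |u_i|^{\lambda_1} |u_i - u_{i-1}|^{\lambda_2} \leq \frac{\lambda_2 (m-n+1)^{\lambda_1}}{\lambda_1 + \lambda_2} \sum_{i=n}^{m} |u_i - u_{i-1}|^{\lambda_1 + \lambda_2}$. -/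
open Finset Real

private lemma tele_sum (f : ℤ → ℝ) (n : ℤ) :
    ∀ k : ℤ, n - 1 ≤ k → ∑ j ∈ Finset.Icc n k, (f (j - 1) - f j) = f (n - 1) - f k := by
  refine Int.le_induction ?_ ?_
  · rw [Finset.Icc_eq_empty (by omega), Finset.sum_empty, sub_self]
  · intro k hk ih
    have hins : Finset.Icc n (k + 1) = insert (k + 1) (Finset.Icc n k) := by
      ext x; simp only [Finset.mem_Icc, Finset.mem_insert]; omega
    rw [hins, Finset.sum_insert (by simp only [Finset.mem_Icc]; omega), ih,
      show k + 1 - 1 = k from by ring]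
    ring

private lemma bern {p : ℝ} (hp : 1 < p) {x y : ℝ} (hx : 0 ≤ x) (hy : 0 ≤ y) :
    x ^ p + p * x ^ (p - 1) * y ≤ (x + y) ^ p := by
  rcases eq_or_lt_of_le hx with h | h
  · rw [← h, Real.zero_rpow (show p ≠ 0 by intro hc; rw [hc] at hp; linarith),
      Real.zero_rpow (show p - 1 ≠ 0 by intro hc; nlinarith), zero_add, mul_zero, zero_mul]
    exact Real.rpow_nonneg (by linarith) p
  · have hs : (-1 : ℝ) ≤ y / x := le_trans (by norm_num : (-1:ℝ) ≤ 0) (div_nonneg hy h.le)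
    have key := one_add_mul_self_le_rpow_one_add hs hp.le
    have h1 : (x + y) ^ p = x ^ p * (1 + y / x) ^ p := by
      rw [← Real.mul_rpow hx (by positivity)]
      congr 1
      field_simp
    have h2 : x ^ (p - 1) = x ^ p / x := by
      rw [Real.rpow_sub h, Real.rpow_one]
    have hxp : 0 < x ^ p := Real.rpow_pos_of_pos h p
    rw [h1, h2]
    calc x ^ p + p * (x ^ p / x) * y = x ^ p * (1 + p * (y / x)) := by
          field_simp
      _ ≤ x ^ p * (1 + y / x) ^ p := mul_le_mul_of_nonneg_left key hxp.le

private lemma log_concave_ineq {a b : ℝ} (ha : 1 ≤ a) (hab : a ≤ b) :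
    (a - 1) * Real.log b ≤ (b - 1) * Real.log a := by
  by_cases hb : b ≤ 1
  · have ha1 : a = 1 := le_antisymm (hab.trans hb) ha
    have hb1 : b = 1 := le_antisymm hb (ha.trans hab)
    simp [ha1, hb1]
  · push_neg at hb
    have hb0 : (0 : ℝ) < b - 1 := by linarith
    have ht0 : 0 ≤ (a - 1) / (b - 1) := div_nonneg (by linarith) hb0.le
    have ht1 : (a - 1) / (b - 1) ≤ 1 := by rw [div_le_one hb0]; linarith
    have key := strictConcaveOn_log_Ioi.concaveOn.2 (Set.mem_Ioi.mpr one_pos)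
      (Set.mem_Ioi.mpr (show (0:ℝ) < b by linarith))
      (show (0:ℝ) ≤ 1 - (a - 1) / (b - 1) by linarith) ht0 (by ring)
    simp only [smul_eq_mul, Real.log_one, mul_zero, mul_one, zero_add] at key
    have harg : 1 - (a - 1) / (b - 1) + (a - 1) / (b - 1) * b = a := by
      field_simp
      ring
    rw [harg] at key
    -- key : (a-1)/(b-1) * log b ≤ log a
    have hta : (b - 1) * ((a - 1) / (b - 1)) = a - 1 := by field_simp
    calc (a - 1) * Real.log b = (b - 1) * ((a - 1) / (b - 1) * Real.log b) := by
          rw [← mul_assoc, hta]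
      _ ≤ (b - 1) * Real.log a := mul_le_mul_of_nonneg_left key hb0.le
theorem discrete_opial_abs_backward
    (n m : ℤ) (u : ℤ → ℝ) (l1 l2 : ℝ)
    (hnm : n ≤ m)
    (hl1 : 1 ≤ l1) (hl2 : 1 ≤ l2)
    (hm : u m = 0) :
    ∑ i ∈ Finset.Icc n (m - 1), |u i| ^ l1 * |u i - u (i - 1)| ^ l2
      ≤ (l2 * ((m : ℝ) - (n : ℝ) + 1) ^ l1) / (l1 + l2) *
        ∑ i ∈ Finset.Icc n m, |u i - u (i - 1)| ^ (l1 + l2) := by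
  set p : ℝ := l1 + l2 with hp_def
  have hp1 : 1 < p := by rw [hp_def]; linarith
  have hp0 : (0 : ℝ) < p := by linarith
  set a : ℤ → ℝ := fun i => |u i - u (i - 1)| with ha_def
  have ha : ∀ i, 0 ≤ a i := fun i => abs_nonneg _
  set A : ℤ → ℝ := fun i => ∑ j ∈ Finset.Icc (i + 1) m, a j with hA_def
  have hA : ∀ i, 0 ≤ A i := fun i => Finset.sum_nonneg fun j _ => ha j
  set S : ℝ := ∑ i ∈ Finset.Icc n m, a i ^ p with hS_def
  have hS : 0 ≤ S := Finset.sum_nonneg fun i _ => Real.rpow_nonneg (ha i) p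
  set N : ℝ := (m : ℝ) - (n : ℝ) + 1 with hN_def
  have hnm' : (n : ℝ) ≤ (m : ℝ) := by exact_mod_cast hnm
  have hN1 : (1 : ℝ) ≤ N := by rw [hN_def]; linarith
  have hN0 : (0 : ℝ) < N := by linarith
  -- A step relation
  have hAstep : ∀ i : ℤ, i ≤ m → A (i - 1) = a i + A i := by
    intro i hi
    have h1 : Finset.Icc (i - 1 + 1) m = insert i (Finset.Icc (i + 1) m) := by
      ext x; simp only [Finset.mem_Icc, Finset.mem_insert]; omega
    rw [hA_def]
    simp only []
    rw [h1, Finset.sum_insert (by simp only [Finset.mem_Icc]; omega)]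
  have hAm : A m = 0 := by
    rw [hA_def]; simp only []
    rw [Finset.Icc_eq_empty (by omega), Finset.sum_empty]
  -- |u i| ≤ A i
  have hu : ∀ i : ℤ, i ≤ m → |u i| ≤ A i := by
    intro i hi
    have ht := tele_sum (fun j => -u j) (i + 1) m (by omega)
    simp only [show i + 1 - 1 = i from by ring] at ht
    -- ht : ∑ j ∈ Icc (i+1) m, (-u (j-1) - -u j) = -u i - -u m
    have h2 : u i = -∑ j ∈ Finset.Icc (i + 1) m, (-u (j - 1) - -u j) := by
      rw [ht, hm]; ring
    calc |u i| = |∑ j ∈ Finset.Icc (i + 1) m, (-u (j - 1) - -u j)| := by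
          rw [h2, abs_neg]
      _ ≤ ∑ j ∈ Finset.Icc (i + 1) m, |(-u (j - 1) - -u j)| :=
          Finset.abs_sum_le_sum_abs _ _
      _ = A i := by
          apply Finset.sum_congr rfl
          intro j _
          rw [show -u (j - 1) - -u j = u j - u (j - 1) from by ring]
  -- key telescoping bound
  have key2 : p * ∑ i ∈ Finset.Icc n m, A i ^ (p - 1) * a i ≤ A (n - 1) ^ p := by
    have ht := tele_sum (fun i => A i ^ p) n m (by omega)
    have hAm0 : A m ^ p = 0 := by rw [hAm, Real.zero_rpow hp0.ne']
    calc p * ∑ i ∈ Finset.Icc n m, A i ^ (p - 1) * a i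
        = ∑ i ∈ Finset.Icc n m, p * (A i ^ (p - 1) * a i) := Finset.mul_sum _ _ _
      _ ≤ ∑ i ∈ Finset.Icc n m, (A (i - 1) ^ p - A i ^ p) := by
          apply Finset.sum_le_sum
          intro i hi
          have him := (Finset.mem_Icc.mp hi).2
          have hb := bern hp1 (hA i) (ha i)
          rw [hAstep i him, add_comm (a i) (A i)]
          linarith
      _ = A (n - 1) ^ p - A m ^ p := ht
      _ = A (n - 1) ^ p := by rw [hAm0, sub_zero]
  -- Hölder-type bound on A (n-1)
  have hAn1 : A (n - 1) = ∑ j ∈ Finset.Icc n m, a j := by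
    rw [hA_def]; simp only []
    rw [show n - 1 + 1 = n from by ring]
  have hcard : ((Finset.Icc n m).card : ℝ) = N := by
    rw [Int.card_Icc, hN_def]
    have h' : (0 : ℤ) ≤ m + 1 - n := by omega
    have h2 : ((m + 1 - n).toNat : ℤ) = m + 1 - n := Int.toNat_of_nonneg h'
    have h3 : ((m + 1 - n).toNat : ℝ) = (m : ℝ) + 1 - n := by exact_mod_cast h2
    rw [h3]; ring
  have key3 : A (n - 1) ^ p ≤ N ^ (p - 1) * S := by
    have h := Real.rpow_sum_le_const_mul_sum_rpow (Finset.Icc n m) a hp1.le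
    simp only [ha_def, abs_abs] at h
    rw [hAn1, ha_def, hS_def]
    rw [hcard] at h
    exact h
  -- combined bound on the partial sums
  have hsubset : Finset.Icc n (m - 1) ⊆ Finset.Icc n m :=
    Finset.Icc_subset_Icc_right (by omega)
  have hT : ∑ i ∈ Finset.Icc n (m - 1), A i ^ (p - 1) * a i ≤ N ^ (p - 1) * S / p := by
    have h1 : ∑ i ∈ Finset.Icc n (m - 1), A i ^ (p - 1) * a i
        ≤ ∑ i ∈ Finset.Icc n m, A i ^ (p - 1) * a i :=
      Finset.sum_le_sum_of_subset_of_nonneg hsubset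
        (fun i _ _ => mul_nonneg (Real.rpow_nonneg (hA i) _) (ha i))
    rw [le_div_iff₀ hp0, mul_comm]
    calc p * ∑ i ∈ Finset.Icc n (m - 1), A i ^ (p - 1) * a i
        ≤ p * ∑ i ∈ Finset.Icc n m, A i ^ (p - 1) * a i :=
          mul_le_mul_of_nonneg_left h1 hp0.le
      _ ≤ A (n - 1) ^ p := key2
      _ ≤ N ^ (p - 1) * S := key3
  have hS1 : ∑ i ∈ Finset.Icc n (m - 1), a i ^ p ≤ S :=
    Finset.sum_le_sum_of_subset_of_nonneg hsubset
      (fun i _ _ => Real.rpow_nonneg (ha i) p)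
  -- first step: replace |u i| by A i
  have step1 : ∑ i ∈ Finset.Icc n (m - 1), |u i| ^ l1 * |u i - u (i - 1)| ^ l2
      ≤ ∑ i ∈ Finset.Icc n (m - 1), A i ^ l1 * a i ^ l2 := by
    apply Finset.sum_le_sum
    intro i hi
    have him := (Finset.mem_Icc.mp hi).2
    exact mul_le_mul_of_nonneg_right
      (Real.rpow_le_rpow (abs_nonneg _) (hu i (by omega)) (by linarith))
      (Real.rpow_nonneg (ha i) l2)
  -- final constant comparison ingredient : p ^ ((l2-1)/(p-1)) ≤ l2
  have hexp : p ^ ((l2 - 1) / (p - 1)) ≤ l2 := by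
    have hlog := log_concave_ineq hl2 (show l2 ≤ p by rw [hp_def]; linarith)
    have hp1' : (0 : ℝ) < p - 1 := by linarith
    have h1 : (l2 - 1) / (p - 1) * Real.log p ≤ Real.log l2 := by
      rw [div_mul_eq_mul_div, div_le_iff₀ hp1']
      calc (l2 - 1) * Real.log p ≤ (p - 1) * Real.log l2 := hlog
        _ = Real.log l2 * (p - 1) := by ring
    calc p ^ ((l2 - 1) / (p - 1)) = Real.exp ((l2 - 1) / (p - 1) * Real.log p) := by
          rw [Real.rpow_def_of_pos hp0, mul_comm]
      _ ≤ Real.exp (Real.log l2) := Real.exp_le_exp.mpr h1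
      _ = l2 := Real.exp_log (by linarith)
  -- now split on whether l2 = 1
  rcases eq_or_lt_of_le hl2 with hl2e | hl2e
  · -- case l2 = 1
    have hpl1 : p - 1 = l1 := by rw [hp_def, ← hl2e]; ring
    calc ∑ i ∈ Finset.Icc n (m - 1), |u i| ^ l1 * |u i - u (i - 1)| ^ l2
        ≤ ∑ i ∈ Finset.Icc n (m - 1), A i ^ l1 * a i ^ l2 := step1
      _ = ∑ i ∈ Finset.Icc n (m - 1), A i ^ (p - 1) * a i := by
          apply Finset.sum_congr rfl
          intro i _
          rw [← hl2e, Real.rpow_one, hpl1]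
      _ ≤ N ^ (p - 1) * S / p := hT
      _ = l2 * N ^ l1 / p * S := by rw [hpl1, ← hl2e]; ring
  · -- case 1 < l2
    have hp1' : (0 : ℝ) < p - 1 := by linarith
    have hl21 : (0 : ℝ) < l2 - 1 := by linarith
    have hl10 : (0 : ℝ) < l1 := by linarith
    set P : ℝ := (p - 1) / l1 with hP_def
    set Q : ℝ := (p - 1) / (l2 - 1) with hQ_def
    have hPinv : 1 / P = l1 / (p - 1) := by rw [hP_def, one_div, inv_div]
    have hQinv : 1 / Q = (l2 - 1) / (p - 1) := by rw [hQ_def, one_div, inv_div]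
    have hP0 : 0 < P := div_pos hp1' hl10
    have hQ0 : 0 < Q := div_pos hp1' hl21
    have hPQ : Real.HolderConjugate P Q := by
      rw [Real.holderConjugate_iff]
      constructor
      · rw [hP_def, lt_div_iff₀ hl10, one_mul, hp_def]
        linarith
      · rw [← one_div, ← one_div, hPinv, hQinv, ← add_div,
          div_eq_one_iff_eq hp1'.ne', hp_def]
        ring
    have hld : ∀ i : ℤ, 0 ≤ A i ^ (p - 1) * a i :=
      fun i => mul_nonneg (Real.rpow_nonneg (hA i) _) (ha i)
    have hpe1 : (p - 1) * (l1 / (p - 1)) = l1 := by field_simp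
    have hsum : l1 / (p - 1) + p * ((l2 - 1) / (p - 1)) = l2 := by
      field_simp
      rw [hp_def]
      ring
    have e1 : ∀ i ∈ Finset.Icc n (m - 1), A i ^ l1 * a i ^ l2
        = (fun i => (A i ^ (p - 1) * a i) ^ (1 / P)) i * (fun i => (a i ^ p) ^ (1 / Q)) i := by
      intro i _
      simp only []
      rw [Real.mul_rpow (Real.rpow_nonneg (hA i) _) (ha i),
        ← Real.rpow_mul (hA i), ← Real.rpow_mul (ha i), hPinv, hQinv, hpe1,
        mul_assoc, ← Real.rpow_add' (ha i) (by rw [hsum]; exact (show (0:ℝ) < l2 by linarith).ne'),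
        hsum]
    have hfP : ∀ i ∈ Finset.Icc n (m - 1),
        ((fun i => (A i ^ (p - 1) * a i) ^ (1 / P)) i) ^ P = A i ^ (p - 1) * a i := by
      intro i _
      simp only []
      rw [← Real.rpow_mul (hld i), one_div, inv_mul_cancel₀ hP0.ne', Real.rpow_one]
    have hgQ : ∀ i ∈ Finset.Icc n (m - 1),
        ((fun i => (a i ^ p) ^ (1 / Q)) i) ^ Q = a i ^ p := by
      intro i _
      simp only []
      rw [← Real.rpow_mul (Real.rpow_nonneg (ha i) p), one_div, inv_mul_cancel₀ hQ0.ne',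
        Real.rpow_one]
    have holder := Real.inner_le_Lp_mul_Lq_of_nonneg (s := Finset.Icc n (m - 1))
      (f := fun i => (A i ^ (p - 1) * a i) ^ (1 / P)) (g := fun i => (a i ^ p) ^ (1 / Q)) hPQ
      (fun i _ => Real.rpow_nonneg (hld i) _)
      (fun i _ => Real.rpow_nonneg (Real.rpow_nonneg (ha i) p) _)
    rw [Finset.sum_congr rfl hfP, Finset.sum_congr rfl hgQ] at holder
    have hT0 : 0 ≤ ∑ i ∈ Finset.Icc n (m - 1), A i ^ (p - 1) * a i :=
      Finset.sum_nonneg fun i _ => hld i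
    have hS10 : 0 ≤ ∑ i ∈ Finset.Icc n (m - 1), a i ^ p :=
      Finset.sum_nonneg fun i _ => Real.rpow_nonneg (ha i) p
    have hNS0 : 0 ≤ N ^ (p - 1) * S / p :=
      div_nonneg (mul_nonneg (Real.rpow_nonneg hN0.le _) hS) hp0.le
    have hbig : (∑ i ∈ Finset.Icc n (m - 1), A i ^ (p - 1) * a i) ^ (1 / P)
          * (∑ i ∈ Finset.Icc n (m - 1), a i ^ p) ^ (1 / Q)
        ≤ (N ^ (p - 1) * S / p) ^ (1 / P) * S ^ (1 / Q) :=
      mul_le_mul (Real.rpow_le_rpow hT0 hT (by positivity))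
        (Real.rpow_le_rpow hS10 hS1 (by positivity))
        (Real.rpow_nonneg hS10 _) (Real.rpow_nonneg hNS0 _)
    -- compute the right-hand side
    have hQexp : p ^ (1 / Q) ≤ l2 := by rw [hQinv]; exact hexp
    have hone : 1 / P + 1 / Q = 1 := by
      rw [one_div, one_div]; exact (Real.holderConjugate_iff.mp hPQ).2
    have hpθ : 0 < p ^ (1 / P) := Real.rpow_pos_of_pos hp0 _
    have hkey : p ≤ l2 * p ^ (1 / P) := by
      calc p = p ^ (1 / Q) * p ^ (1 / P) := by
            rw [← Real.rpow_add hp0, add_comm, hone, Real.rpow_one]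
        _ ≤ l2 * p ^ (1 / P) :=
            mul_le_mul_of_nonneg_right hQexp (Real.rpow_nonneg hp0.le _)
    have heq : (N ^ (p - 1) * S / p) ^ (1 / P) * S ^ (1 / Q)
        = N ^ l1 * S ^ (1 / P) * S ^ (1 / Q) / p ^ (1 / P) := by
      rw [Real.div_rpow (mul_nonneg (Real.rpow_nonneg hN0.le _) hS) hp0.le,
        Real.mul_rpow (Real.rpow_nonneg hN0.le _) hS,
        ← Real.rpow_mul hN0.le, hPinv, hpe1]
      ring
    have hSS : S ^ (1 / P) * S ^ (1 / Q) = S := by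
      rw [← Real.rpow_add' hS (by rw [hone]; norm_num), hone, Real.rpow_one]
    have h2 : 1 / p ^ (1 / P) ≤ l2 / p := by
      rw [div_le_div_iff₀ hpθ hp0, one_mul]
      linarith
    calc ∑ i ∈ Finset.Icc n (m - 1), |u i| ^ l1 * |u i - u (i - 1)| ^ l2
        ≤ ∑ i ∈ Finset.Icc n (m - 1), A i ^ l1 * a i ^ l2 := step1
      _ = ∑ i ∈ Finset.Icc n (m - 1),
            (fun i => (A i ^ (p - 1) * a i) ^ (1 / P)) i * (fun i => (a i ^ p) ^ (1 / Q)) i :=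
          Finset.sum_congr rfl e1
      _ ≤ (∑ i ∈ Finset.Icc n (m - 1), A i ^ (p - 1) * a i) ^ (1 / P)
            * (∑ i ∈ Finset.Icc n (m - 1), a i ^ p) ^ (1 / Q) := holder
      _ ≤ (N ^ (p - 1) * S / p) ^ (1 / P) * S ^ (1 / Q) := hbig
      _ = N ^ l1 * S * (1 / p ^ (1 / P)) := by
          rw [heq, mul_assoc, hSS]
          ring
      _ ≤ N ^ l1 * S * (l2 / p) :=
          mul_le_mul_of_nonneg_left h2 (mul_nonneg (Real.rpow_nonneg hN0.le _) hS)
      _ = l2 * N ^ l1 / p * S := by ring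
end

section
/- Let $\{u_i\}_{i=0}^{n}$ be a sequence of closed bounded intervals with $u_0 = [0,0]$, and let $\lambda_1, \lambda_2 \geq 1$ be natural numbers. If the sequences of lower endpoints $\underline{u_i}$ and upper endpoints $\overline{u_i}$ are both non-decreasing (so each $u_i \subseteq [0,\infty)$ componentwise increasing from $0$), and the length $\overline{u_i} - \underline{u_i}$ is non-decreasing in $i$, then $\sum_{i=1}^{n} \max\{|\underline{u_i}^{\lambda_1} (\underline{u_i} - \underline{u_{i-1}})^{\lambda_2}|, |\overline{u_i}^{\lambda_1} (\overline{u_i} - \overline{u_{i-1}})^{\lambda_2}|\} \leq \frac{\lambda_2 (n+1)^{\lambda_1}}{\lambda_1 + \lambda_2} \sum_{i=1}^{n} \big(\max\{|\underline{u_i} - \underline{u_{i-1}}|, |\overline{u_i} - \overline{u_{i-1}}|\}\big)^{\lambda_1 + \lambda_2}$. -/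
open Finset

-- Young / weighted AM-GM with natural exponents
lemma my_young (a b : ℕ) (x y : ℝ) (hx : 0 ≤ x) (hy : 0 ≤ y) (hab : 0 < a + b) :
    x ^ a * y ^ b ≤ ((a : ℝ) / ((a : ℝ) + b)) * x ^ (a + b)
      + ((b : ℝ) / ((a : ℝ) + b)) * y ^ (a + b) := by
  have hP : (0:ℝ) < (a:ℝ) + b := by exact_mod_cast hab
  have hw : (a : ℝ) / ((a:ℝ)+b) + (b:ℝ) / ((a:ℝ)+b) = 1 := by field_simp
  have h := Real.geom_mean_le_arith_mean2_weighted
    (by positivity : (0:ℝ) ≤ (a:ℝ)/((a:ℝ)+b)) (by positivity : (0:ℝ) ≤ (b:ℝ)/((a:ℝ)+b))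
    (by positivity : (0:ℝ) ≤ x ^ (a+b)) (by positivity : (0:ℝ) ≤ y ^ (a+b)) hw
  have e1 : (x ^ (a+b)) ^ ((a:ℝ)/((a:ℝ)+b)) = x ^ a := by
    rw [← Real.rpow_natCast x (a+b), ← Real.rpow_mul hx]
    rw [show ((a+b : ℕ) : ℝ) * ((a:ℝ)/((a:ℝ)+b)) = (a:ℝ) by push_cast; field_simp]
    exact Real.rpow_natCast x a
  have e2 : (y ^ (a+b)) ^ ((b:ℝ)/((a:ℝ)+b)) = y ^ b := by
    rw [← Real.rpow_natCast y (a+b), ← Real.rpow_mul hy]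
    rw [show ((a+b : ℕ) : ℝ) * ((b:ℝ)/((a:ℝ)+b)) = (b:ℝ) by push_cast; field_simp]
    exact Real.rpow_natCast y b
  rw [e1, e2] at h
  exact h

-- Bernoulli type
lemma my_bern (m : ℕ) (hm : 1 ≤ m) (x : ℝ) (hx : 1 ≤ x) :
    x ^ m + m * x ^ (m - 1) ≤ (x + 1) ^ m := by
  obtain ⟨k, rfl⟩ : ∃ k, m = k + 1 := ⟨m - 1, (Nat.succ_pred_eq_of_pos hm).symm⟩
  have hx0 : (0:ℝ) < x := lt_of_lt_of_le one_pos hx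
  have h1 : 1 + ((k+1 : ℕ) : ℝ) * (1/x) ≤ (1 + 1/x) ^ (k+1) := by
    refine one_add_mul_le_pow ?_ (k+1)
    have : (0:ℝ) ≤ 1/x := by positivity
    linarith
  have h2 := mul_le_mul_of_nonneg_left h1 (by positivity : (0:ℝ) ≤ x ^ (k+1))
  have e1 : x ^ (k+1) * (1 + ((k+1:ℕ):ℝ) * (1/x)) = x ^ (k+1) + ((k+1:ℕ):ℝ) * x ^ k := by
    have : x ≠ 0 := ne_of_gt hx0
    field_simp
    ring
  have e2 : x ^ (k+1) * (1 + 1/x) ^ (k+1) = (x + 1) ^ (k+1) := by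
    rw [← mul_pow]
    congr 1
    field_simp
  rw [e1, e2] at h2
  simpa using h2

-- telescoping
lemma my_tele (b : ℕ → ℝ) : ∀ n, ∑ i ∈ Icc 1 n, (b i - b (i - 1)) = b n - b 0 := by
  intro n
  induction n with
  | zero => simp
  | succ n ih =>
      rw [← Finset.insert_Icc_right_eq_Icc_add_one (by omega), Finset.sum_insert (by simp)]
      simp only [Nat.add_sub_cancel]
      rw [ih]; ring

-- nonnegativity of a monotone sequence starting at 0
lemma my_nonneg (b : ℕ → ℝ) (n : ℕ) (h0 : b 0 = 0) (h : ∀ i < n, b i ≤ b (i+1)) :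
    ∀ i ≤ n, 0 ≤ b i := by
  intro i hi
  induction i with
  | zero => simp [h0]
  | succ i ih =>
      exact le_trans (ih (by omega)) (h i (by omega))

lemma my_core (l1 l2 : ℕ) (h1 : 1 ≤ l1) (h2 : 1 ≤ l2) :
    ∀ (n : ℕ) (b : ℕ → ℝ), b 0 = 0 → (∀ i < n, b i ≤ b (i+1)) →
    ∑ i ∈ Icc 1 n, (b i) ^ l1 * (b i - b (i-1)) ^ l2
      ≤ ((l2:ℝ) * ((n:ℝ)+1) ^ l1) / ((l1:ℝ) + (l2:ℝ)) *
          ∑ i ∈ Icc 1 n, (b i - b (i-1)) ^ (l1 + l2) := by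
  intro n
  induction n with
  | zero => intro b hb0 _; simp
  | succ n ih =>
      intro b hb0 hmono
      have hmono' : ∀ i < n, b i ≤ b (i+1) := fun i hi => hmono i (by omega)
      have IH := ih b hb0 hmono'
      have hbnn : ∀ i ≤ n + 1, 0 ≤ b i := my_nonneg b (n+1) hb0 hmono
      have hD : ∀ j ∈ Icc 1 (n+1), 0 ≤ b j - b (j-1) := by
        intro j hj
        simp only [mem_Icc] at hj
        obtain ⟨k, rfl⟩ : ∃ k, j = k + 1 := ⟨j - 1, by omega⟩
        simp only [Nat.add_sub_cancel]
        have := hmono k (by omega)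
        linarith
      set P := l1 + l2 with hP
      have hPpos : (0:ℝ) < (l1:ℝ) + l2 := by
        have : (1:ℝ) ≤ (l1:ℝ) := by exact_mod_cast h1
        have : (1:ℝ) ≤ (l2:ℝ) := by exact_mod_cast h2
        linarith [this]
      set S : ℝ := ∑ i ∈ Icc 1 n, (b i - b (i-1)) ^ P with hS
      set t : ℝ := b (n+1) - b n with ht
      have htnn : 0 ≤ t := hD (n+1) (by simp)
      have hSnn : 0 ≤ S := by
        apply Finset.sum_nonneg
        intro i hi
        exact pow_nonneg (hD i (by simp only [mem_Icc] at hi ⊢; omega)) P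
      have hTnn : 0 ≤ t ^ P := pow_nonneg htnn P
      -- split sums
      rw [← Finset.insert_Icc_right_eq_Icc_add_one (by omega : 1 ≤ n + 1)]
      rw [Finset.sum_insert (by simp), Finset.sum_insert (by simp)]
      simp only [Nat.add_sub_cancel]
      -- key bound on the new term
      have hx1 : (1:ℝ) ≤ (n:ℝ) + 1 := by
        have : (0:ℝ) ≤ (n:ℝ) := Nat.cast_nonneg n
        linarith
      -- Jensen
      have hb_eq : b (n+1) = ∑ j ∈ Icc 1 (n+1), (b j - b (j-1)) := by
        rw [my_tele b (n+1), hb0]; ring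
      have hjensen : b (n+1) ^ l1 ≤ ((n:ℝ)+1) ^ (l1 - 1) * ∑ j ∈ Icc 1 (n+1), (b j - b (j-1)) ^ l1 := by
        have hcard : (#(Icc 1 (n+1)) : ℝ) = (n:ℝ) + 1 := by
          rw [Nat.card_Icc]; push_cast; ring
        have h := pow_sum_div_card_le_sum_pow (f := fun j => b j - b (j-1)) hD (l1 - 1)
        rw [hcard] at h
        rw [Nat.sub_add_cancel h1] at h
        rw [hb_eq]
        calc (∑ j ∈ Icc 1 (n+1), (b j - b (j-1))) ^ l1
            = ((∑ j ∈ Icc 1 (n+1), (b j - b (j-1))) ^ l1 / ((n:ℝ)+1) ^ (l1-1)) * ((n:ℝ)+1)^(l1-1) := by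
              field_simp
          _ ≤ (∑ j ∈ Icc 1 (n+1), (b j - b (j-1)) ^ l1) * ((n:ℝ)+1)^(l1-1) := by
              apply mul_le_mul_of_nonneg_right h (by positivity)
          _ = _ := by ring
      -- Young per term
      have hyoung : ∀ j ∈ Icc 1 (n+1),
          (b j - b (j-1)) ^ l1 * t ^ l2
            ≤ ((l1:ℝ)/((l1:ℝ)+l2)) * (b j - b (j-1)) ^ P + ((l2:ℝ)/((l1:ℝ)+l2)) * t ^ P := by
        intro j hj
        exact my_young l1 l2 _ _ (hD j hj) htnn (by omega)
      have hkey : b (n+1) ^ l1 * t ^ l2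
          ≤ ((n:ℝ)+1) ^ (l1-1) *
            (((l1:ℝ)/((l1:ℝ)+l2)) * (S + t ^ P) + ((n:ℝ)+1) * (((l2:ℝ)/((l1:ℝ)+l2)) * t ^ P)) := by
        calc b (n+1) ^ l1 * t ^ l2
            ≤ (((n:ℝ)+1) ^ (l1 - 1) * ∑ j ∈ Icc 1 (n+1), (b j - b (j-1)) ^ l1) * t ^ l2 :=
              mul_le_mul_of_nonneg_right hjensen (pow_nonneg htnn l2)
          _ = ((n:ℝ)+1) ^ (l1 - 1) * ∑ j ∈ Icc 1 (n+1), (b j - b (j-1)) ^ l1 * t ^ l2 := by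
              rw [mul_assoc, Finset.sum_mul]
          _ ≤ ((n:ℝ)+1) ^ (l1 - 1) * ∑ j ∈ Icc 1 (n+1),
                (((l1:ℝ)/((l1:ℝ)+l2)) * (b j - b (j-1)) ^ P + ((l2:ℝ)/((l1:ℝ)+l2)) * t ^ P) := by
              apply mul_le_mul_of_nonneg_left (Finset.sum_le_sum hyoung) (by positivity)
          _ = _ := by
              congr 1
              rw [Finset.sum_add_distrib, ← Finset.mul_sum, Finset.sum_const, Nat.card_Icc]
              simp only [Nat.add_sub_cancel]
              rw [← Finset.insert_Icc_right_eq_Icc_add_one (by omega : 1 ≤ n + 1), Finset.sum_insert (by simp)]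
              simp only [Nat.add_sub_cancel]
              push_cast
              ring
      -- Bernoulli facts
      have hbern : ((n:ℝ)+1) ^ l1 + (l1:ℝ) * ((n:ℝ)+1) ^ (l1-1) ≤ ((n:ℝ)+2) ^ l1 := by
        have := my_bern l1 h1 ((n:ℝ)+1) hx1
        calc ((n:ℝ)+1) ^ l1 + (l1:ℝ) * ((n:ℝ)+1) ^ (l1-1) ≤ (((n:ℝ)+1)+1) ^ l1 := this
          _ = ((n:ℝ)+2) ^ l1 := by congr 1; ring
      have hsplit : ((n:ℝ)+1) ^ l1 = ((n:ℝ)+1) ^ (l1-1) * ((n:ℝ)+1) := by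
        rw [← pow_succ, Nat.sub_add_cancel h1]
      have hl2r : (1:ℝ) ≤ (l2:ℝ) := by exact_mod_cast h2
      have hl1r : (0:ℝ) ≤ (l1:ℝ) := by positivity
      have hq : (0:ℝ) ≤ ((n:ℝ)+1)^(l1-1) := by positivity
      -- final arithmetic
      have hcoefS : (l2:ℝ) * ((n:ℝ)+1) ^ l1 + (l1:ℝ) * ((n:ℝ)+1) ^ (l1-1) ≤ (l2:ℝ) * ((n:ℝ)+2) ^ l1 := by
        have h3 : (l2:ℝ) * (((n:ℝ)+1) ^ l1 + (l1:ℝ) * ((n:ℝ)+1) ^ (l1-1)) ≤ (l2:ℝ) * ((n:ℝ)+2) ^ l1 :=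
          mul_le_mul_of_nonneg_left hbern (by linarith)
        nlinarith [mul_nonneg hl1r hq]
      have hcoefT : (l1:ℝ) * ((n:ℝ)+1) ^ (l1-1) + ((n:ℝ)+1) * ((l2:ℝ) * ((n:ℝ)+1) ^ (l1-1))
          ≤ (l2:ℝ) * ((n:ℝ)+2) ^ l1 := by
        have : ((n:ℝ)+1) * ((l2:ℝ) * ((n:ℝ)+1) ^ (l1-1)) = (l2:ℝ) * ((n:ℝ)+1) ^ l1 := by
          rw [hsplit]; ring
        rw [this]
        linarith [hcoefS]
      have goalcast : ((n+1:ℕ):ℝ) + 1 = (n:ℝ) + 2 := by push_cast; ring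
      rw [goalcast]
      -- combine
      have final : b (n+1) ^ l1 * t ^ l2 + ∑ i ∈ Icc 1 n, (b i)^l1 * (b i - b (i-1))^l2
          ≤ ((l2:ℝ) * ((n:ℝ)+2) ^ l1) / ((l1:ℝ)+(l2:ℝ)) * (t ^ P + S) := by
        have step1 : b (n+1) ^ l1 * t ^ l2 + ∑ i ∈ Icc 1 n, (b i)^l1 * (b i - b (i-1))^l2
            ≤ ((n:ℝ)+1) ^ (l1-1) *
              (((l1:ℝ)/((l1:ℝ)+l2)) * (S + t ^ P) + ((n:ℝ)+1) * (((l2:ℝ)/((l1:ℝ)+l2)) * t ^ P))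
              + ((l2:ℝ) * ((n:ℝ)+1) ^ l1) / ((l1:ℝ)+(l2:ℝ)) * S := by
          exact add_le_add hkey IH
        refine step1.trans ?_
        have lhs_eq : ((n:ℝ)+1) ^ (l1-1) *
              (((l1:ℝ)/((l1:ℝ)+l2)) * (S + t ^ P) + ((n:ℝ)+1) * (((l2:ℝ)/((l1:ℝ)+l2)) * t ^ P))
              + ((l2:ℝ) * ((n:ℝ)+1) ^ l1) / ((l1:ℝ)+(l2:ℝ)) * S
            = (((n:ℝ)+1) ^ (l1-1) * ((l1:ℝ) * (S + t ^ P) + ((n:ℝ)+1) * ((l2:ℝ) * t ^ P))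
                + (l2:ℝ) * ((n:ℝ)+1) ^ l1 * S) / ((l1:ℝ)+(l2:ℝ)) := by
          field_simp
          try ring
        have rhs_eq : ((l2:ℝ) * ((n:ℝ)+2) ^ l1) / ((l1:ℝ)+(l2:ℝ)) * (t ^ P + S)
            = ((l2:ℝ) * ((n:ℝ)+2) ^ l1 * (t ^ P + S)) / ((l1:ℝ)+(l2:ℝ)) := by
          ring
        rw [lhs_eq, rhs_eq]
        gcongr ?_ / _
        have c1 : ((n:ℝ)+1)^(l1-1) * (l1:ℝ) + (l2:ℝ) * ((n:ℝ)+1)^l1 ≤ (l2:ℝ) * ((n:ℝ)+2)^l1 := by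
          have : ((n:ℝ)+1)^(l1-1) * (l1:ℝ) = (l1:ℝ) * ((n:ℝ)+1)^(l1-1) := by ring
          rw [this]; linarith [hcoefS]
        have c2 : ((n:ℝ)+1)^(l1-1) * (l1:ℝ) + ((n:ℝ)+1)^(l1-1) * (((n:ℝ)+1) * (l2:ℝ)) ≤ (l2:ℝ) * ((n:ℝ)+2)^l1 := by
          have e : ((n:ℝ)+1)^(l1-1) * (l1:ℝ) + ((n:ℝ)+1)^(l1-1) * (((n:ℝ)+1) * (l2:ℝ))
              = (l1:ℝ) * ((n:ℝ)+1)^(l1-1) + ((n:ℝ)+1) * ((l2:ℝ) * ((n:ℝ)+1)^(l1-1)) := by ring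
          rw [e]; exact hcoefT
        calc ((n:ℝ)+1) ^ (l1-1) * ((l1:ℝ) * (S + t ^ P) + ((n:ℝ)+1) * ((l2:ℝ) * t ^ P))
                + (l2:ℝ) * ((n:ℝ)+1) ^ l1 * S
            = (((n:ℝ)+1)^(l1-1) * (l1:ℝ) + (l2:ℝ) * ((n:ℝ)+1)^l1) * S
              + (((n:ℝ)+1)^(l1-1) * (l1:ℝ) + ((n:ℝ)+1)^(l1-1) * (((n:ℝ)+1) * (l2:ℝ))) * t ^ P := by
              ring
          _ ≤ ((l2:ℝ) * ((n:ℝ)+2)^l1) * S + ((l2:ℝ) * ((n:ℝ)+2)^l1) * t ^ P :=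
              add_le_add (mul_le_mul_of_nonneg_right c1 hSnn) (mul_le_mul_of_nonneg_right c2 hTnn)
          _ = (l2:ℝ) * ((n:ℝ)+2) ^ l1 * (t ^ P + S) := by ring
      exact final


theorem interval_opial_increasing
    (n : ℕ) (lo hi : ℕ → ℝ) (l1 l2 : ℕ)
    (hl1 : 1 ≤ l1) (hl2 : 1 ≤ l2)
    (hvalid : ∀ i ≤ n, lo i ≤ hi i)
    (h0lo : lo 0 = 0) (h0hi : hi 0 = 0)
    (hlo : ∀ i < n, lo i ≤ lo (i + 1))
    (hhi : ∀ i < n, hi i ≤ hi (i + 1))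
    (hlen : ∀ i < n, hi i - lo i ≤ hi (i + 1) - lo (i + 1)) :
    ∑ i ∈ Finset.Icc 1 n,
        max |(lo i) ^ l1 * (lo i - lo (i - 1)) ^ l2|
            |(hi i) ^ l1 * (hi i - hi (i - 1)) ^ l2|
      ≤ ((l2 : ℝ) * ((n : ℝ) + 1) ^ l1) / ((l1 : ℝ) + (l2 : ℝ)) *
        ∑ i ∈ Finset.Icc 1 n,
          (max |lo i - lo (i - 1)| |hi i - hi (i - 1)|) ^ (l1 + l2) := by
  have hlonn : ∀ i ≤ n, 0 ≤ lo i := my_nonneg lo n h0lo hlo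
  have hhinn : ∀ i ≤ n, 0 ≤ hi i := my_nonneg hi n h0hi hhi
  have hfacts : ∀ i ∈ Finset.Icc 1 n,
      0 ≤ lo i - lo (i-1) ∧ lo i - lo (i-1) ≤ hi i - hi (i-1) ∧ 0 ≤ lo i := by
    intro i hi'
    simp only [Finset.mem_Icc] at hi'
    obtain ⟨k, rfl⟩ : ∃ k, i = k + 1 := ⟨i - 1, by omega⟩
    simp only [Nat.add_sub_cancel]
    have h1 := hlo k (by omega)
    have h2 := hlen k (by omega)
    have h3 := hlonn (k+1) (by omega)
    exact ⟨by linarith, by linarith, h3⟩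
  have hmax1 : ∀ i ∈ Finset.Icc 1 n,
      max |(lo i) ^ l1 * (lo i - lo (i - 1)) ^ l2| |(hi i) ^ l1 * (hi i - hi (i - 1)) ^ l2|
        = (hi i) ^ l1 * (hi i - hi (i - 1)) ^ l2 := by
    intro i hi'
    obtain ⟨hd1, hd2, hl0⟩ := hfacts i hi'
    simp only [Finset.mem_Icc] at hi'
    have hdh : 0 ≤ hi i - hi (i-1) := le_trans hd1 hd2
    have hle : (lo i) ^ l1 * (lo i - lo (i - 1)) ^ l2 ≤ (hi i) ^ l1 * (hi i - hi (i - 1)) ^ l2 := by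
      apply mul_le_mul (pow_le_pow_left₀ hl0 (hvalid i hi'.2) l1)
        (pow_le_pow_left₀ hd1 hd2 l2) (pow_nonneg hd1 l2)
        (pow_nonneg (hhinn i hi'.2) l1)
    rw [abs_of_nonneg (mul_nonneg (pow_nonneg hl0 l1) (pow_nonneg hd1 l2)),
      abs_of_nonneg (mul_nonneg (pow_nonneg (hhinn i hi'.2) l1) (pow_nonneg hdh l2))]
    exact max_eq_right hle
  have hmax2 : ∀ i ∈ Finset.Icc 1 n,
      (max |lo i - lo (i - 1)| |hi i - hi (i - 1)|) ^ (l1 + l2)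
        = (hi i - hi (i - 1)) ^ (l1 + l2) := by
    intro i hi'
    obtain ⟨hd1, hd2, _⟩ := hfacts i hi'
    rw [abs_of_nonneg hd1, abs_of_nonneg (le_trans hd1 hd2), max_eq_right hd2]
  rw [Finset.sum_congr rfl hmax1, Finset.sum_congr rfl hmax2]
  exact my_core l1 l2 hl1 hl2 n hi h0hi hhi
end

section
/- Let $\{u_i\}_{i=0}^{m}$ be a sequence of closed bounded intervals with $u_m = [0,0]$, let $n \le m-1$, and let $\lambda_1, \lambda_2 \geq 1$ be natural numbers. If both endpoint sequences $\underline{u_i}$ and $\overline{u_i}$ are monotone (both non-decreasing or both non-increasing) and the length $\mathrm{len}(u_i)$ is non-increasing in $i$, then $\sum_{i=n}^{m-1} \|u_i^{\lambda_1}(\nabla u_i)^{\lambda_2}\| \leq \frac{\lambda_2 (m-n+1)^{\lambda_1}}{\lambda_1 + \lambda_2} \sum_{i=n}^{m} \|\nabla u_i\|^{\lambda_1 + \lambda_2}$, where $\|\cdot\|$ is the interval quasi-norm. -/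
/-- gH-difference of intervals given by endpoint pairs. -/
def gH (u v : ℝ × ℝ) : ℝ × ℝ :=
  (min (u.1 - v.1) (u.2 - v.2), max (u.1 - v.1) (u.2 - v.2))

/-- Interval multiplication. -/
def imul (u v : ℝ × ℝ) : ℝ × ℝ :=
  (min (min (u.1 * v.1) (u.1 * v.2)) (min (u.2 * v.1) (u.2 * v.2)),
   max (max (u.1 * v.1) (u.1 * v.2)) (max (u.2 * v.1) (u.2 * v.2)))

/-- Power of an interval, as the image interval `{t^k : t ∈ u}`. -/
noncomputable def ipowI (u : ℝ × ℝ) (k : ℕ) : ℝ × ℝ :=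
  (sInf ((fun t : ℝ => t ^ k) '' Set.Icc u.1 u.2),
   sSup ((fun t : ℝ => t ^ k) '' Set.Icc u.1 u.2))

/-- Quasi-norm of an interval. -/
def inorm (u : ℝ × ℝ) : ℝ := max |u.1| |u.2|

/-! ### Auxiliary lemmas -/

private lemma inorm_nonneg' (u : ℝ × ℝ) : 0 ≤ inorm u :=
  le_trans (abs_nonneg _) (le_max_left _ _)

private lemma abs_fst_le_inorm (u : ℝ × ℝ) : |u.1| ≤ inorm u := le_max_left _ _
private lemma abs_snd_le_inorm (u : ℝ × ℝ) : |u.2| ≤ inorm u := le_max_right _ _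

private lemma abs_min_le' {x y C : ℝ} (hx : |x| ≤ C) (hy : |y| ≤ C) : |min x y| ≤ C := by
  rcases min_cases x y with ⟨h, _⟩ | ⟨h, _⟩ <;> rw [h] <;> assumption

private lemma abs_max_le' {x y C : ℝ} (hx : |x| ≤ C) (hy : |y| ≤ C) : |max x y| ≤ C := by
  rcases max_cases x y with ⟨h, _⟩ | ⟨h, _⟩ <;> rw [h] <;> assumption

private lemma inorm_imul_le (u v : ℝ × ℝ) : inorm (imul u v) ≤ inorm u * inorm v := by
  have key : ∀ a b : ℝ, |a| ≤ inorm u → |b| ≤ inorm v → |a * b| ≤ inorm u * inorm v := by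
    intro a b ha hb
    rw [abs_mul]
    exact mul_le_mul ha hb (abs_nonneg _) (inorm_nonneg' u)
  have h11 := key u.1 v.1 (abs_fst_le_inorm u) (abs_fst_le_inorm v)
  have h12 := key u.1 v.2 (abs_fst_le_inorm u) (abs_snd_le_inorm v)
  have h21 := key u.2 v.1 (abs_snd_le_inorm u) (abs_fst_le_inorm v)
  have h22 := key u.2 v.2 (abs_snd_le_inorm u) (abs_snd_le_inorm v)
  exact max_le (abs_min_le' (abs_min_le' h11 h12) (abs_min_le' h21 h22))
    (abs_max_le' (abs_max_le' h11 h12) (abs_max_le' h21 h22))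

private lemma inorm_ipowI_le {u : ℝ × ℝ} (h : u.1 ≤ u.2) (k : ℕ) :
    inorm (ipowI u k) ≤ inorm u ^ k := by
  set s : Set ℝ := (fun t : ℝ => t ^ k) '' Set.Icc u.1 u.2 with hs
  have hne : s.Nonempty := ⟨u.1 ^ k, ⟨u.1, Set.left_mem_Icc.mpr h, rfl⟩⟩
  have hbound : ∀ x ∈ s, |x| ≤ inorm u ^ k := by
    rintro x ⟨t, ht, rfl⟩
    rw [abs_pow]
    apply pow_le_pow_left₀ (abs_nonneg t)
    rw [abs_le]
    constructor
    · calc -(inorm u) ≤ -|u.1| := neg_le_neg (abs_fst_le_inorm u)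
        _ ≤ u.1 := neg_abs_le _
        _ ≤ t := ht.1
    · exact le_trans ht.2 (le_trans (le_abs_self _) (abs_snd_le_inorm u))
  have hbdd : BddAbove s := ⟨inorm u ^ k, fun x hx => (abs_le.mp (hbound x hx)).2⟩
  have hbddb : BddBelow s := ⟨-(inorm u ^ k), fun x hx => (abs_le.mp (hbound x hx)).1⟩
  obtain ⟨x0, hx0⟩ := id hne
  have hsup_le : sSup s ≤ inorm u ^ k :=
    csSup_le hne (fun x hx => (abs_le.mp (hbound x hx)).2)
  have hsup_ge : -(inorm u ^ k) ≤ sSup s :=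
    le_trans (abs_le.mp (hbound x0 hx0)).1 (le_csSup hbdd hx0)
  have hinf_le : sInf s ≤ inorm u ^ k :=
    le_trans (csInf_le hbddb hx0) (abs_le.mp (hbound x0 hx0)).2
  have hinf_ge : -(inorm u ^ k) ≤ sInf s :=
    le_csInf hne (fun x hx => (abs_le.mp (hbound x hx)).1)
  exact max_le (abs_le.mpr ⟨hinf_ge, hinf_le⟩) (abs_le.mpr ⟨hsup_ge, hsup_le⟩)

private lemma gH_fst_le_snd (u v : ℝ × ℝ) : (gH u v).1 ≤ (gH u v).2 :=
  le_trans (min_le_left _ _) (le_max_left _ _)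

private lemma abs_d1_le_inorm_gH (u v : ℝ × ℝ) : |u.1 - v.1| ≤ inorm (gH u v) := by
  unfold gH inorm
  rcases le_total (u.1 - v.1) (u.2 - v.2) with h | h
  · simp only [min_eq_left h]
    exact le_max_left _ _
  · simp only [max_eq_left h]
    exact le_max_right _ _

private lemma abs_d2_le_inorm_gH (u v : ℝ × ℝ) : |u.2 - v.2| ≤ inorm (gH u v) := by
  unfold gH inorm
  rcases le_total (u.1 - v.1) (u.2 - v.2) with h | h
  · simp only [max_eq_right h]
    exact le_max_right _ _
  · simp only [min_eq_right h]
    exact le_max_left _ _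

private lemma chain_ineq {x y s : ℝ} (hy : 0 ≤ y) (hyx : y ≤ x) (hs : 1 ≤ s) :
    y ^ (s - 1) * (x - y) ≤ (x ^ s - y ^ s) / s := by
  have hs0 : 0 < s := lt_of_lt_of_le one_pos hs
  have hx0 : 0 ≤ x := le_trans hy hyx
  rcases eq_or_lt_of_le hy with hy0 | hy0
  · rcases eq_or_lt_of_le hs with hs1 | hs1
    · rw [← hs1, ← hy0]; simp
    · rw [← hy0, Real.zero_rpow (ne_of_gt (by linarith : (0:ℝ) < s - 1)),
        Real.zero_rpow (ne_of_gt hs0), zero_mul, sub_zero]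
      positivity
  · set t : ℝ := (x - y) / y with ht
    have ht0 : 0 ≤ t := by
      apply div_nonneg (by linarith) hy0.le
    have hbern : 1 + s * t ≤ (1 + t) ^ s :=
      one_add_mul_self_le_rpow_one_add (by linarith) hs
    have hx : y * (1 + t) = x := by
      rw [ht, mul_add, mul_one, ← mul_div_assoc, mul_comm y (x - y), mul_div_assoc,
        div_self hy0.ne', mul_one]; ring
    have hys : (0:ℝ) < y ^ s := Real.rpow_pos_of_pos hy0 s
    have h2 : y ^ s * (1 + s * t) ≤ y ^ s * (1 + t) ^ s :=
      mul_le_mul_of_nonneg_left hbern hys.le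
    rw [← Real.mul_rpow hy (by linarith), hx] at h2
    have hysub : y ^ (s - 1) = y ^ s / y := by
      rw [Real.rpow_sub hy0, Real.rpow_one]
    have h3 : y ^ s * (s * t) = s * (y ^ (s - 1) * (x - y)) := by
      rw [hysub, ht]; field_simp
    rw [le_div_iff₀ hs0]
    nlinarith [h2, h3]

private lemma sumpow {p : ℝ} (hp : 1 ≤ p) :
    ∀ M : ℕ, ∑ k ∈ Finset.range M, ((k : ℝ) + 1) ^ (p - 1) ≤ ((M : ℝ) + 1) ^ p / p := by
  have hp0 : 0 < p := lt_of_lt_of_le one_pos hp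
  intro M
  induction M with
  | zero => simp [Real.one_rpow]; positivity
  | succ M ih =>
    rw [Finset.sum_range_succ]
    have hu : (1:ℝ) ≤ (M:ℝ) + 1 := le_add_of_nonneg_left (Nat.cast_nonneg M)
    have hu0 : (0:ℝ) < (M:ℝ) + 1 := by positivity
    set u : ℝ := (M:ℝ) + 1 with hud
    have hbern : 1 + p * (1/u) ≤ (1 + 1/u) ^ p :=
      one_add_mul_self_le_rpow_one_add (le_trans (by norm_num) (le_of_lt (one_div_pos.mpr hu0))) hp
    have h2 : u ^ p * (1 + p * (1/u)) ≤ u ^ p * (1 + 1/u) ^ p :=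
      mul_le_mul_of_nonneg_left hbern (Real.rpow_nonneg hu0.le p)
    rw [← Real.mul_rpow hu0.le (by positivity)] at h2
    have hx : u * (1 + 1/u) = u + 1 := by field_simp
    rw [hx] at h2
    have husub : u ^ (p - 1) = u ^ p / u := by
      rw [Real.rpow_sub hu0, Real.rpow_one]
    have h3 : u ^ p * (1 + p * (1/u)) = u ^ p + p * (u ^ p / u) := by ring
    have key : u ^ p + p * u ^ (p-1) ≤ (u + 1) ^ p := by
      rw [husub]; rw [h3] at h2; exact h2
    have hthis : ((M:ℝ) + 1 + 1) = u + 1 := by rw [hud]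
    push_cast
    rw [hthis]
    have h4 : u ^ p / p + u ^ (p - 1) = (u ^ p + p * u ^ (p - 1)) / p := by
      field_simp
    have hk2 : u ^ p / p + u ^ (p - 1) ≤ (u + 1) ^ p / p := by
      rw [h4]; gcongr
    linarith [ih, hk2]

private lemma tele_fwd (g : ℕ → ℝ) :
    ∀ m i, i ≤ m → ∑ j ∈ Finset.Icc (i+1) m, (g (j-1) - g j) = g i - g m := by
  intro m
  induction m with
  | zero => intro i hi; interval_cases i; simp
  | succ m ih =>
    intro i hi
    rcases Nat.lt_or_ge i (m+1) with h | h
    · have hi' : i ≤ m := by omega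
      rw [Finset.sum_Icc_succ_top (by omega : i + 1 ≤ m + 1)]
      rw [ih i hi']
      simp only [Nat.add_sub_cancel]
      ring
    · have : i = m + 1 := by omega
      subst this
      simp

private lemma tele_bwd (h : ℕ → ℝ) :
    ∀ m i, i ≤ m + 1 → ∑ j ∈ Finset.Icc i m, (h j - h (j+1)) = h i - h (m+1) := by
  intro m
  induction m with
  | zero =>
    intro i hi
    interval_cases i
    · simp
    · simp
  | succ m ih =>
    intro i hi
    rcases Nat.lt_or_ge i (m+2) with hlt | hge
    · rcases Nat.lt_or_ge i (m+1) with h1 | h1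
      · rw [Finset.sum_Icc_succ_top (by omega : i ≤ m + 1), ih i (by omega)]
        ring
      · have : i = m + 1 := by omega
        subst this
        simp
    · have : i = m + 2 := by omega
      subst this
      rw [Finset.Icc_eq_empty (by omega)]
      simp

private lemma sumpow2 {P : ℝ} (hP : 1 ≤ P) {n m : ℕ} (hnm : n + 1 ≤ m) :
    ∑ i ∈ Finset.Icc n (m-1), (((m - i : ℕ) : ℝ) ^ (P - 1))
      ≤ ((m:ℝ) - (n:ℝ) + 1) ^ P / P := by
  have hre : ∑ i ∈ Finset.Icc n (m-1), (((m - i : ℕ) : ℝ) ^ (P - 1))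
      = ∑ k ∈ Finset.range (m - n), ((k : ℝ) + 1) ^ (P - 1) := by
    apply Finset.sum_nbij' (fun i => m - 1 - i) (fun k => m - 1 - k)
    · intro i hi
      rw [Finset.mem_Icc] at hi
      rw [Finset.mem_range]
      omega
    · intro k hk
      rw [Finset.mem_range] at hk
      rw [Finset.mem_Icc]
      omega
    · intro i hi
      rw [Finset.mem_Icc] at hi
      omega
    · intro k hk
      rw [Finset.mem_range] at hk
      omega
    · intro i hi
      rw [Finset.mem_Icc] at hi
      have e : m - i = (m - 1 - i) + 1 := by omega
      rw [e]
      push_cast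
      ring_nf
  rw [hre]
  calc ∑ k ∈ Finset.range (m - n), ((k : ℝ) + 1) ^ (P - 1)
      ≤ (((m - n : ℕ) : ℝ) + 1) ^ P / P := sumpow hP (m - n)
    _ = ((m:ℝ) - (n:ℝ) + 1) ^ P / P := by
        rw [Nat.cast_sub (by omega : n ≤ m)]

private lemma core_opial (n m : ℕ) (l1 l2 : ℝ) (hl1 : 1 ≤ l1) (hl2 : 1 ≤ l2)
    (hnm : n + 1 ≤ m) (a : ℕ → ℝ) (ha : ∀ j, 0 ≤ a j) :
    ∑ i ∈ Finset.Icc n (m-1), (∑ j ∈ Finset.Icc (i+1) m, a j) ^ l1 * a i ^ l2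
      ≤ (l2 * ((m:ℝ) - (n:ℝ) + 1) ^ l1) / (l1 + l2) *
        ∑ i ∈ Finset.Icc n m, a i ^ (l1 + l2) := by
  have hl10 : (0:ℝ) < l1 := lt_of_lt_of_le one_pos hl1
  have hl20 : (0:ℝ) < l2 := lt_of_lt_of_le one_pos hl2
  set P : ℝ := l1 + l2 with hPdef
  have hP1 : 1 ≤ P := by simp only [hPdef]; linarith
  have hP0 : 0 < P := by linarith
  have hl1P : l1 < P := by simp only [hPdef]; linarith
  have hl2P : l2 < P := by simp only [hPdef]; linarith
  set C : ℕ → ℝ := fun i => ∑ j ∈ Finset.Icc i m, a j ^ P with hCdef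
  have hCnn : ∀ i, 0 ≤ C i := fun i =>
    Finset.sum_nonneg (fun j _ => Real.rpow_nonneg (ha j) P)
  have hCstep : ∀ i, i ≤ m → C i = a i ^ P + C (i+1) := by
    intro i him
    simp only [hCdef]
    rw [Finset.Icc_eq_cons_Ioc him, Finset.sum_cons, ← Finset.Icc_add_one_left_eq_Ioc]
  have hCmono : ∀ i, i ≤ m → C (i+1) ≤ C i := by
    intro i him
    rw [hCstep i him]
    have := Real.rpow_nonneg (ha i) P
    linarith
  set f : ℕ → ℝ := fun i => (((m - i : ℕ) : ℝ) ^ (P - 1)) ^ (l1 / P) with hfdef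
  set g : ℕ → ℝ := fun i =>
    ((l2 / P) * (C i ^ (P / l2) - C (i+1) ^ (P / l2))) ^ (l2 / P) with hgdef
  have hgin : ∀ i, i ≤ m → 0 ≤ (l2 / P) * (C i ^ (P / l2) - C (i+1) ^ (P / l2)) := by
    intro i him
    apply mul_nonneg (by positivity)
    rw [sub_nonneg]
    exact Real.rpow_le_rpow (hCnn _) (hCmono i him) (by positivity)
  have hpt : ∀ i ∈ Finset.Icc n (m-1),
      (∑ j ∈ Finset.Icc (i+1) m, a j) ^ l1 * a i ^ l2 ≤ f i * g i := by
    intro i hi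
    rw [Finset.mem_Icc] at hi
    have him : i + 1 ≤ m := by omega
    have himlt : i ≤ m := by omega
    set S : ℝ := ∑ j ∈ Finset.Icc (i+1) m, a j with hSdef
    have hS : 0 ≤ S := Finset.sum_nonneg (fun j _ => ha j)
    have stepA : S ^ P ≤ ((m - i : ℕ) : ℝ) ^ (P - 1) * C (i+1) := by
      have h := Real.rpow_sum_le_const_mul_sum_rpow (Finset.Icc (i+1) m) a hP1
      simp only [abs_of_nonneg (ha _)] at h
      rw [Nat.card_Icc] at h
      have : m + 1 - (i + 1) = m - i := by omega
      rw [this] at h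
      exact h
    have hcast : (0:ℝ) ≤ ((m - i : ℕ) : ℝ) := Nat.cast_nonneg _
    have hX : (0:ℝ) ≤ ((m - i : ℕ) : ℝ) ^ (P - 1) := Real.rpow_nonneg hcast _
    have hPl1 : P * (l1 / P) = l1 := by field_simp
    have hPl2 : P * (l2 / P) = l2 := by field_simp
    have h1 : S ^ l1 ≤ f i * C (i+1) ^ (l1 / P) := by
      have e : (S ^ P) ^ (l1 / P) = S ^ l1 := by
        rw [← Real.rpow_mul hS, hPl1]
      calc S ^ l1 = (S ^ P) ^ (l1 / P) := e.symm
        _ ≤ (((m - i : ℕ) : ℝ) ^ (P - 1) * C (i+1)) ^ (l1 / P) :=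
            Real.rpow_le_rpow (Real.rpow_nonneg hS P) stepA (by positivity)
        _ = f i * C (i+1) ^ (l1 / P) := by
            rw [Real.mul_rpow hX (hCnn _)]
    have h2 : a i ^ l2 = (C i - C (i+1)) ^ (l2 / P) := by
      have hstep := hCstep i himlt
      have e : a i ^ P = C i - C (i+1) := by linarith
      rw [← e, ← Real.rpow_mul (ha i), hPl2]
    have hsub : 0 ≤ C i - C (i+1) := by
      have := hCmono i himlt; linarith
    have h3 : C (i+1) ^ (l1 / P) * (C i - C (i+1)) ^ (l2 / P) ≤ g i := by
      have e1 : C (i+1) ^ (l1 / P) = (C (i+1) ^ (l1 / l2)) ^ (l2 / P) := by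
        rw [← Real.rpow_mul (hCnn _)]
        congr 1
        field_simp
      rw [e1, ← Real.mul_rpow (Real.rpow_nonneg (hCnn _) _) hsub]
      apply Real.rpow_le_rpow
        (mul_nonneg (Real.rpow_nonneg (hCnn _) _) hsub) ?_ (by positivity)
      have hs1 : 1 ≤ P / l2 := (one_le_div hl20).mpr (le_of_lt hl2P)
      have hch := chain_ineq (hCnn (i+1)) (hCmono i himlt) hs1
      have es : P / l2 - 1 = l1 / l2 := by field_simp; ring
      have ed : (C i ^ (P/l2) - C (i+1) ^ (P/l2)) / (P / l2)
          = (l2 / P) * (C i ^ (P/l2) - C (i+1) ^ (P/l2)) := by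
        field_simp
      rw [es, ed] at hch
      exact hch
    calc S ^ l1 * a i ^ l2
        = S ^ l1 * (C i - C (i+1)) ^ (l2 / P) := by rw [h2]
      _ ≤ (f i * C (i+1) ^ (l1 / P)) * (C i - C (i+1)) ^ (l2 / P) :=
          mul_le_mul_of_nonneg_right h1 (Real.rpow_nonneg hsub _)
      _ = f i * (C (i+1) ^ (l1 / P) * (C i - C (i+1)) ^ (l2 / P)) := by ring
      _ ≤ f i * g i := by
          apply mul_le_mul_of_nonneg_left h3 (Real.rpow_nonneg hX _)
  -- telescoping bound
  have tele : ∑ i ∈ Finset.Icc n (m-1),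
      ((l2 / P) * (C i ^ (P / l2) - C (i+1) ^ (P / l2)))
      ≤ (l2 / P) * C n ^ (P / l2) := by
    rw [← Finset.mul_sum]
    apply mul_le_mul_of_nonneg_left _ (by positivity : (0:ℝ) ≤ l2 / P)
    rw [tele_bwd (fun i => C i ^ (P / l2)) (m-1) n (by omega)]
    have hm1 : m - 1 + 1 = m := by omega
    rw [hm1]
    have := Real.rpow_nonneg (hCnn m) (P / l2)
    linarith
  have hsum2 : ∑ i ∈ Finset.Icc n (m-1), (((m - i : ℕ) : ℝ) ^ (P - 1))
      ≤ ((m:ℝ) - (n:ℝ) + 1) ^ P / P := sumpow2 hP1 hnm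
  -- Hölder
  have hconj : (P / l1).HolderConjugate (P / l2) := by
    rw [Real.holderConjugate_iff]
    constructor
    · rw [lt_div_iff₀ hl10]; linarith
    · rw [inv_div, inv_div]
      rw [← add_div, hPdef, div_self (by linarith : l1 + l2 ≠ 0)]
  have hfn : ∀ i, 0 ≤ f i := fun i => by rw [hfdef]; positivity
  have hgn : ∀ i ∈ Finset.Icc n (m-1), 0 ≤ g i := fun i hi => by
    rw [hgdef]
    exact Real.rpow_nonneg (hgin i (by rw [Finset.mem_Icc] at hi; omega)) _
  have holder := Real.inner_le_Lp_mul_Lq_of_nonneg (s := Finset.Icc n (m-1)) hconj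
    (fun i _ => hfn i) hgn
  have hfp : ∀ i, f i ^ (P / l1) = ((m - i : ℕ) : ℝ) ^ (P - 1) := by
    intro i
    rw [hfdef, ← Real.rpow_mul (by positivity)]
    rw [div_mul_div_comm, mul_comm l1 P, div_self (by positivity : P * l1 ≠ 0), Real.rpow_one]
  have hgp : ∀ i, i ≤ m → g i ^ (P / l2)
      = (l2 / P) * (C i ^ (P / l2) - C (i+1) ^ (P / l2)) := by
    intro i him
    rw [hgdef, ← Real.rpow_mul (hgin i him)]
    rw [div_mul_div_comm, mul_comm l2 P, div_self (by positivity : P * l2 ≠ 0), Real.rpow_one]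
  rw [Finset.sum_congr rfl (fun i _ => hfp i)] at holder
  rw [Finset.sum_congr rfl (fun i hi => hgp i (by
    rw [Finset.mem_Icc] at hi; omega))] at holder
  have hone1 : 1 / (P / l1) = l1 / P := by rw [one_div, inv_div]
  have hone2 : 1 / (P / l2) = l2 / P := by rw [one_div, inv_div]
  rw [hone1, hone2] at holder
  have hB1 : (0:ℝ) ≤ ∑ i ∈ Finset.Icc n (m-1), ((m - i : ℕ) : ℝ) ^ (P - 1) :=
    Finset.sum_nonneg fun i _ => Real.rpow_nonneg (Nat.cast_nonneg _) _
  have hB2 : (0:ℝ) ≤ ∑ i ∈ Finset.Icc n (m-1),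
      (l2 / P) * (C i ^ (P / l2) - C (i+1) ^ (P / l2)) :=
    Finset.sum_nonneg fun i hi => hgin i (by rw [Finset.mem_Icc] at hi; omega)
  set M : ℝ := (m:ℝ) - (n:ℝ) + 1 with hMdef
  have hM0 : 0 < M := by
    have h5 : (n:ℝ) + 1 ≤ (m:ℝ) := by exact_mod_cast hnm
    rw [hMdef]; linarith
  have hfinal : (∑ i ∈ Finset.Icc n (m-1), ((m - i : ℕ) : ℝ) ^ (P - 1)) ^ (l1 / P) *
      (∑ i ∈ Finset.Icc n (m-1), (l2 / P) * (C i ^ (P / l2) - C (i+1) ^ (P / l2))) ^ (l2 / P)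
      ≤ (M ^ P / P) ^ (l1 / P) * ((l2 / P) * C n ^ (P / l2)) ^ (l2 / P) := by
    apply mul_le_mul
    · exact Real.rpow_le_rpow hB1 hsum2 (by positivity)
    · exact Real.rpow_le_rpow hB2 tele (by positivity)
    · exact Real.rpow_nonneg hB2 _
    · positivity
  have hsimp : (M ^ P / P) ^ (l1 / P) * ((l2 / P) * C n ^ (P / l2)) ^ (l2 / P)
      ≤ (l2 * M ^ l1) / P * C n := by
    have ePl1 : P * (l1 / P) = l1 := by field_simp
    have e1 : (M ^ P / P) ^ (l1 / P) = M ^ l1 * (1 / P) ^ (l1 / P) := by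
      rw [div_eq_mul_one_div (M ^ P) P, Real.mul_rpow (by positivity) (by positivity),
        ← Real.rpow_mul hM0.le, ePl1]
    have e2 : ((l2 / P) * C n ^ (P / l2)) ^ (l2 / P)
        = (l2 / P) ^ (l2 / P) * C n := by
      rw [Real.mul_rpow (by positivity) (Real.rpow_nonneg (hCnn n) _),
        ← Real.rpow_mul (hCnn n), div_mul_div_comm, mul_comm P l2,
        div_self (by positivity : l2 * P ≠ 0), Real.rpow_one]
    have e3 : (l2 / P) ^ (l2 / P) = l2 ^ (l2 / P) * (1 / P) ^ (l2 / P) := by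
      rw [← Real.mul_rpow (by positivity) (by positivity)]
      congr 1
      ring
    have e4 : (1 / P) ^ (l1 / P) * (1 / P) ^ (l2 / P) = 1 / P := by
      rw [← Real.rpow_add (by positivity), ← add_div, hPdef,
        div_self (by linarith : l1 + l2 ≠ 0), Real.rpow_one]
    rw [e1, e2, e3]
    have e5 : l2 ^ (l2 / P) ≤ l2 := by
      calc l2 ^ (l2 / P) ≤ l2 ^ (1:ℝ) :=
        Real.rpow_le_rpow_of_exponent_le hl2 (by rw [div_le_one hP0]; linarith)
      _ = l2 := Real.rpow_one l2
    calc M ^ l1 * (1 / P) ^ (l1 / P) * (l2 ^ (l2 / P) * (1 / P) ^ (l2 / P) * C n)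
        = (M ^ l1 * C n * ((1 / P) ^ (l1 / P) * (1 / P) ^ (l2 / P))) * l2 ^ (l2 / P) := by
          ring
      _ ≤ (M ^ l1 * C n * ((1 / P) ^ (l1 / P) * (1 / P) ^ (l2 / P))) * l2 := by
          apply mul_le_mul_of_nonneg_left e5
          have h6 := hCnn n
          positivity
      _ = (l2 * M ^ l1) / P * C n := by rw [e4]; ring
  calc ∑ i ∈ Finset.Icc n (m-1), (∑ j ∈ Finset.Icc (i+1) m, a j) ^ l1 * a i ^ l2
      ≤ ∑ i ∈ Finset.Icc n (m-1), f i * g i := Finset.sum_le_sum hpt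
    _ ≤ _ := holder
    _ ≤ (M ^ P / P) ^ (l1 / P) * ((l2 / P) * C n ^ (P / l2)) ^ (l2 / P) := hfinal
    _ ≤ (l2 * M ^ l1) / P * C n := hsimp
    _ = (l2 * M ^ l1) / (l1 + l2) * ∑ i ∈ Finset.Icc n m, a i ^ (l1 + l2) := by
        simp only [hCdef, hPdef]

theorem interval_opial_mu_decreasing
    (n m : ℕ) (lo hi : ℕ → ℝ) (l1 l2 : ℕ)
    (hl1 : 1 ≤ l1) (hl2 : 1 ≤ l2)
    (hn : 1 ≤ n) (hnm : n ≤ m - 1) (hm : 1 ≤ m)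
    (hvalid : ∀ i ≤ m, lo i ≤ hi i)
    (hmlo : lo m = 0) (hmhi : hi m = 0)
    (hmono : (∀ i < m, lo i ≤ lo (i + 1) ∧ hi i ≤ hi (i + 1)) ∨
             (∀ i < m, lo (i + 1) ≤ lo i ∧ hi (i + 1) ≤ hi i))
    (hlen : ∀ i < m, hi (i + 1) - lo (i + 1) ≤ hi i - lo i) :
    ∑ i ∈ Finset.Icc n (m - 1),
        inorm (imul (ipowI (lo i, hi i) l1)
                    (ipowI (gH (lo i, hi i) (lo (i - 1), hi (i - 1))) l2))
      ≤ ((l2 : ℝ) * ((m : ℝ) - (n : ℝ) + 1) ^ l1) / ((l1 : ℝ) + (l2 : ℝ)) *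
        ∑ i ∈ Finset.Icc n m,
          (inorm (gH (lo i, hi i) (lo (i - 1), hi (i - 1)))) ^ (l1 + l2) := by
  have hnm' : n + 1 ≤ m := by omega
  set a : ℕ → ℝ := fun j => inorm (gH (lo j, hi j) (lo (j - 1), hi (j - 1))) with hadef
  have ha : ∀ j, 0 ≤ a j := fun j => inorm_nonneg' _
  -- bound on inorm of the interval by total variation
  have hbound : ∀ i, i ≤ m → inorm (lo i, hi i) ≤ ∑ j ∈ Finset.Icc (i+1) m, a j := by
    intro i him
    have hterm : ∀ j ∈ Finset.Icc (i+1) m, |lo (j-1) - lo j| ≤ a j := by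
      intro j hj
      rw [abs_sub_comm]
      exact abs_d1_le_inorm_gH (lo j, hi j) (lo (j-1), hi (j-1))
    have hterm2 : ∀ j ∈ Finset.Icc (i+1) m, |hi (j-1) - hi j| ≤ a j := by
      intro j hj
      rw [abs_sub_comm]
      exact abs_d2_le_inorm_gH (lo j, hi j) (lo (j-1), hi (j-1))
    have h1 : |lo i| ≤ ∑ j ∈ Finset.Icc (i+1) m, a j := by
      calc |lo i| = |∑ j ∈ Finset.Icc (i+1) m, (lo (j-1) - lo j)| := by
            rw [tele_fwd lo m i him, hmlo, sub_zero]
        _ ≤ ∑ j ∈ Finset.Icc (i+1) m, |lo (j-1) - lo j| := Finset.abs_sum_le_sum_abs _ _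
        _ ≤ ∑ j ∈ Finset.Icc (i+1) m, a j := Finset.sum_le_sum hterm
    have h2 : |hi i| ≤ ∑ j ∈ Finset.Icc (i+1) m, a j := by
      calc |hi i| = |∑ j ∈ Finset.Icc (i+1) m, (hi (j-1) - hi j)| := by
            rw [tele_fwd hi m i him, hmhi, sub_zero]
        _ ≤ ∑ j ∈ Finset.Icc (i+1) m, |hi (j-1) - hi j| := Finset.abs_sum_le_sum_abs _ _
        _ ≤ ∑ j ∈ Finset.Icc (i+1) m, a j := Finset.sum_le_sum hterm2
    exact max_le h1 h2
  -- pointwise bound on LHS terms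
  have hpt : ∀ i ∈ Finset.Icc n (m-1),
      inorm (imul (ipowI (lo i, hi i) l1)
        (ipowI (gH (lo i, hi i) (lo (i - 1), hi (i - 1))) l2))
      ≤ (∑ j ∈ Finset.Icc (i+1) m, a j) ^ l1 * a i ^ l2 := by
    intro i hi'
    rw [Finset.mem_Icc] at hi'
    have him : i ≤ m := by omega
    have hSnn : (0:ℝ) ≤ ∑ j ∈ Finset.Icc (i+1) m, a j :=
      Finset.sum_nonneg fun j _ => ha j
    calc inorm (imul (ipowI (lo i, hi i) l1)
          (ipowI (gH (lo i, hi i) (lo (i - 1), hi (i - 1))) l2))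
        ≤ inorm (ipowI (lo i, hi i) l1) *
            inorm (ipowI (gH (lo i, hi i) (lo (i - 1), hi (i - 1))) l2) :=
          inorm_imul_le _ _
      _ ≤ inorm (lo i, hi i) ^ l1 * a i ^ l2 := by
          apply mul_le_mul (inorm_ipowI_le (hvalid i him) l1)
            (inorm_ipowI_le (gH_fst_le_snd _ _) l2)
            (inorm_nonneg' _) (pow_nonneg (inorm_nonneg' _) l1)
      _ ≤ (∑ j ∈ Finset.Icc (i+1) m, a j) ^ l1 * a i ^ l2 := by
          apply mul_le_mul_of_nonneg_right
            (pow_le_pow_left₀ (inorm_nonneg' _) (hbound i him) l1)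
            (pow_nonneg (ha i) l2)
  have hcore := core_opial n m (l1:ℝ) (l2:ℝ) (by exact_mod_cast hl1) (by exact_mod_cast hl2)
    hnm' a ha
  -- convert rpow to pow
  have hrw1 : ∀ i, (∑ j ∈ Finset.Icc (i+1) m, a j) ^ (l1:ℝ) * a i ^ (l2:ℝ)
      = (∑ j ∈ Finset.Icc (i+1) m, a j) ^ l1 * a i ^ l2 := by
    intro i
    rw [Real.rpow_natCast, Real.rpow_natCast]
  have hrw2 : ∀ i, a i ^ ((l1:ℝ) + (l2:ℝ)) = a i ^ (l1 + l2) := by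
    intro i
    rw [show ((l1:ℝ) + (l2:ℝ)) = ((l1 + l2 : ℕ) : ℝ) by push_cast; ring, Real.rpow_natCast]
  rw [Finset.sum_congr rfl (fun i _ => hrw1 i)] at hcore
  rw [Finset.sum_congr rfl (fun i _ => hrw2 i)] at hcore
  rw [Real.rpow_natCast] at hcore
  calc ∑ i ∈ Finset.Icc n (m - 1),
        inorm (imul (ipowI (lo i, hi i) l1)
          (ipowI (gH (lo i, hi i) (lo (i - 1), hi (i - 1))) l2))
      ≤ ∑ i ∈ Finset.Icc n (m-1), (∑ j ∈ Finset.Icc (i+1) m, a j) ^ l1 * a i ^ l2 :=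
        Finset.sum_le_sum hpt
    _ ≤ ((l2 : ℝ) * ((m : ℝ) - (n : ℝ) + 1) ^ l1) / ((l1 : ℝ) + (l2 : ℝ)) *
        ∑ i ∈ Finset.Icc n m, a i ^ (l1 + l2) := hcore
end

section
/- Let $\{u_i\}_{i=0}^{n}$ and $\{v_i\}_{i=0}^{n}$ be sequences of closed bounded intervals with $u_0 = v_0 = [0,0]$, such that all endpoint sequences $\underline{u_i}, \overline{u_i}, \underline{v_i}, \overline{v_i}$ are non-decreasing and the lengths $\mathrm{len}(u_i)$ and $\mathrm{len}(v_i)$ are non-decreasing. Then for each $1 \le i \le n$, the Leibniz-type identity $u_{i-1} \cdot \nabla v_i + v_i \cdot \nabla u_i = \nabla(u_i v_i)$ holds, where $\nabla w_i = w_i \ominus_g w_{i-1}$ denotes the backward gH-difference and $\cdot$ is interval multiplication. -/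
/-- Minkowski addition of intervals. -/
def iadd (u v : ℝ × ℝ) : ℝ × ℝ := (u.1 + v.1, u.2 + v.2)

lemma imul_eq (a b c d : ℝ) (ha : 0 ≤ a) (hab : a ≤ b) (hc : 0 ≤ c) (hcd : c ≤ d) :
    imul (a, b) (c, d) = (a * c, b * d) := by
  have hb : 0 ≤ b := ha.trans hab
  have hd : 0 ≤ d := hc.trans hcd
  have h1 : a * c ≤ a * d := by nlinarith
  have h2 : a * c ≤ b * c := by nlinarith
  have h3 : a * d ≤ b * d := by nlinarith
  have h4 : b * c ≤ b * d := by nlinarith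
  simp only [imul]
  rw [min_eq_left h1, min_eq_left h4, min_eq_left h2, max_eq_right h1, max_eq_right h4,
    max_eq_right h3]

lemma gH_eq (a b c d : ℝ) (h : a - c ≤ b - d) : gH (a, b) (c, d) = (a - c, b - d) := by
  simp [gH, min_eq_left h, max_eq_right h]

theorem interval_leibniz_identity
    (n : ℕ) (ulo uhi vlo vhi : ℕ → ℝ)
    (huvalid : ∀ i ≤ n, ulo i ≤ uhi i)
    (hvvalid : ∀ i ≤ n, vlo i ≤ vhi i)
    (hu0 : ulo 0 = 0 ∧ uhi 0 = 0) (hv0 : vlo 0 = 0 ∧ vhi 0 = 0)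
    (hulo : ∀ i < n, ulo i ≤ ulo (i + 1))
    (huhi : ∀ i < n, uhi i ≤ uhi (i + 1))
    (hvlo : ∀ i < n, vlo i ≤ vlo (i + 1))
    (hvhi : ∀ i < n, vhi i ≤ vhi (i + 1))
    (hulen : ∀ i < n, uhi i - ulo i ≤ uhi (i + 1) - ulo (i + 1))
    (hvlen : ∀ i < n, vhi i - vlo i ≤ vhi (i + 1) - vlo (i + 1)) :
    ∀ i, 1 ≤ i → i ≤ n →
      iadd (imul (ulo (i - 1), uhi (i - 1)) (gH (vlo i, vhi i) (vlo (i - 1), vhi (i - 1))))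
           (imul (vlo i, vhi i) (gH (ulo i, uhi i) (ulo (i - 1), uhi (i - 1))))
        = gH (imul (ulo i, uhi i) (vlo i, vhi i))
             (imul (ulo (i - 1), uhi (i - 1)) (vlo (i - 1), vhi (i - 1))) := by
  intro i hi1 hin
  obtain ⟨j, rfl⟩ : ∃ j, i = j + 1 := ⟨i - 1, (Nat.succ_pred_eq_of_pos hi1).symm⟩
  simp only [Nat.add_sub_cancel]
  have hjn : j < n := hin
  have hjle : j ≤ n := hjn.le
  -- nonnegativity
  have nonneg : ∀ (f : ℕ → ℝ), f 0 = 0 → (∀ k < n, f k ≤ f (k + 1)) → ∀ k ≤ n, 0 ≤ f k := by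
    intro f h0 hmono k
    induction k with
    | zero => intro _; exact h0.ge
    | succ m ih => intro hm; exact (ih (Nat.le_of_succ_le hm)).trans (hmono m hm)
  have hul := nonneg ulo hu0.1 hulo
  have huh := nonneg uhi hu0.2 huhi
  have hvl := nonneg vlo hv0.1 hvlo
  have hvh := nonneg vhi hv0.2 hvhi
  have hgu : gH (ulo (j+1), uhi (j+1)) (ulo j, uhi j)
      = (ulo (j+1) - ulo j, uhi (j+1) - uhi j) := gH_eq _ _ _ _ (by have := hulen j hjn; linarith)
  have hgv : gH (vlo (j+1), vhi (j+1)) (vlo j, vhi j)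
      = (vlo (j+1) - vlo j, vhi (j+1) - vhi j) := gH_eq _ _ _ _ (by have := hvlen j hjn; linarith)
  rw [hgu, hgv]
  have hduv : ulo (j+1) - ulo j ≤ uhi (j+1) - uhi j := by have := hulen j hjn; linarith
  have hdvv : vlo (j+1) - vlo j ≤ vhi (j+1) - vhi j := by have := hvlen j hjn; linarith
  rw [imul_eq _ _ _ _ (hul j hjle) (huvalid j hjle) (by linarith [hvlo j hjn]) hdvv]
  rw [imul_eq _ _ _ _ (hvl (j+1) hin) (hvvalid (j+1) hin) (by linarith [hulo j hjn]) hduv]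
  rw [imul_eq _ _ _ _ (hul (j+1) hin) (huvalid (j+1) hin) (hvl (j+1) hin) (hvvalid (j+1) hin)]
  rw [imul_eq _ _ _ _ (hul j hjle) (huvalid j hjle) (hvl j hjle) (hvvalid j hjle)]
  have key : ulo (j+1) * vlo (j+1) - ulo j * vlo j ≤ uhi (j+1) * vhi (j+1) - uhi j * vhi j := by
    have e1 : ulo (j+1) * vlo (j+1) - ulo j * vlo j
        = ulo j * (vlo (j+1) - vlo j) + vlo (j+1) * (ulo (j+1) - ulo j) := by ring
    have e2 : uhi (j+1) * vhi (j+1) - uhi j * vhi j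
        = uhi j * (vhi (j+1) - vhi j) + vhi (j+1) * (uhi (j+1) - uhi j) := by ring
    rw [e1, e2]
    have h1 : ulo j * (vlo (j+1) - vlo j) ≤ uhi j * (vhi (j+1) - vhi j) := by
      apply mul_le_mul (huvalid j hjle) hdvv (by linarith [hvlo j hjn]) (huh j hjle)
    have h2 : vlo (j+1) * (ulo (j+1) - ulo j) ≤ vhi (j+1) * (uhi (j+1) - uhi j) := by
      apply mul_le_mul (hvvalid (j+1) hin) hduv (by linarith [hulo j hjn]) (hvh (j+1) hin)
    linarith
  rw [gH_eq _ _ _ _ key]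
  simp only [iadd, Prod.mk.injEq]
  constructor <;> ring
end

section
/- Let $\{u_i\}_{i=0}^{m}$ be a sequence of real numbers with $u_0 = u_m = 0$, and let $\lambda_1, \lambda_2 \geq 1$ be real numbers. Then $\sum_{i=1}^{m-1} |u_i|^{\lambda_1} |u_i - u_{i-1}|^{\lambda_2} \leq \frac{\lambda_2 (\lfloor m/2 \rfloor + 1)^{\lambda_1}}{\lambda_1 + \lambda_2} \sum_{i=1}^{m} |u_i - u_{i-1}|^{\lambda_1 + \lambda_2}$. -/
open Finset Real

lemma opial_d_mono (l1 l2 c : ℝ) (hl1 : 1 ≤ l1) (hl2 : 1 ≤ l2) (hc : 0 ≤ c)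
    {i t : ℝ} (hi : 1 ≤ i) (hit : i ≤ t) :
    i ^ (l1 + l2 - 1) * (c + i ^ (l1 + l2) / l2) ^ (-(l2 / (l1 + l2)))
      ≤ t ^ (l1 + l2 - 1) * (c + t ^ (l1 + l2) / l2) ^ (-(l2 / (l1 + l2))) := by
  set p := l1 + l2 with hp
  have hp0 : (0:ℝ) < p := by rw [hp]; linarith
  have hl20 : (0:ℝ) < l2 := by linarith
  have hi0 : (0:ℝ) < i := by linarith
  have ht0 : (0:ℝ) < t := lt_of_lt_of_le hi0 hit
  have hψi : (0:ℝ) < c + i ^ p / l2 := by positivity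
  have hψt : (0:ℝ) < c + t ^ p / l2 := by positivity
  set e := l2 / p with he
  have he0 : (0:ℝ) ≤ e := by positivity
  have hpij : i ^ p ≤ t ^ p := Real.rpow_le_rpow hi0.le hit hp0.le
  have key : (c + t ^ p / l2) * i ^ p ≤ (c + i ^ p / l2) * t ^ p := by
    have hring : (c + t ^ p / l2) * i ^ p - (c + i ^ p / l2) * t ^ p = c * i ^ p - c * t ^ p := by
      field_simp; ring
    have := mul_le_mul_of_nonneg_left hpij hc
    linarith
  have key2 : ((c + t ^ p / l2) * i ^ p) ^ e ≤ ((c + i ^ p / l2) * t ^ p) ^ e :=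
    Real.rpow_le_rpow (by positivity) key he0
  have hip : (i ^ p) ^ e = i ^ l2 := by
    rw [← Real.rpow_mul hi0.le, he, mul_comm, div_mul_cancel₀ _ hp0.ne']
  have htp : (t ^ p) ^ e = t ^ l2 := by
    rw [← Real.rpow_mul ht0.le, he, mul_comm, div_mul_cancel₀ _ hp0.ne']
  rw [Real.mul_rpow hψt.le (by positivity), Real.mul_rpow hψi.le (by positivity),
    hip, htp] at key2
  -- key2 : ψt^e * i^l2 ≤ ψi^e * t^l2
  rw [Real.rpow_neg hψi.le, Real.rpow_neg hψt.le, ← div_eq_mul_inv, ← div_eq_mul_inv,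
    div_le_div_iff₀ (by positivity) (by positivity)]
  -- goal : i^(p-1) * (ψt^e) ≤ t^(p-1) * (ψi^e)
  have hi1 : i ^ (p - 1) = i ^ (l1 - 1) * i ^ l2 := by
    rw [← Real.rpow_add hi0]; congr 1; rw [hp]; ring
  have ht1 : t ^ (p - 1) = t ^ (l1 - 1) * t ^ l2 := by
    rw [← Real.rpow_add ht0]; congr 1; rw [hp]; ring
  have key3 : i ^ l2 * (c + t ^ p / l2) ^ e ≤ t ^ l2 * (c + i ^ p / l2) ^ e := by
    rw [mul_comm, mul_comm (t ^ l2)]; exact key2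
  rw [hi1, ht1, mul_assoc, mul_assoc]
  refine mul_le_mul (Real.rpow_le_rpow hi0.le hit (by linarith)) key3 ?_ (by positivity)
  positivity

lemma opial_G_step (l1 l2 c : ℝ) (hl1 : 1 ≤ l1) (hl2 : 1 ≤ l2) (hc : 0 ≤ c)
    {i : ℝ} (hi : 1 ≤ i) :
    l1 / l2 * (i ^ (l1 + l2 - 1) * (c + i ^ (l1 + l2) / l2) ^ (-(l2 / (l1 + l2))))
      ≤ (c + (i + 1) ^ (l1 + l2) / l2) ^ (l1 / (l1 + l2))
        - (c + i ^ (l1 + l2) / l2) ^ (l1 / (l1 + l2)) := by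
  set p := l1 + l2 with hp
  have hp0 : (0:ℝ) < p := by rw [hp]; linarith
  have hl20 : (0:ℝ) < l2 := by linarith
  have hl10 : (0:ℝ) < l1 := by linarith
  set f : ℝ → ℝ := fun t => (c + t ^ p / l2) ^ (l1 / p) with hf
  have hder : ∀ t : ℝ, 0 < t →
      HasDerivAt f (l1 / l2 * (t ^ (p - 1) * (c + t ^ p / l2) ^ (-(l2 / p)))) t := by
    intro t ht0
    have hψ : (0:ℝ) < c + t ^ p / l2 := by positivity
    have h1 : HasDerivAt (fun s : ℝ => c + s ^ p / l2) (p * t ^ (p - 1) / l2) t :=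
      ((Real.hasDerivAt_rpow_const (Or.inl ht0.ne')).div_const l2).const_add c
    have h2 := h1.rpow_const (p := l1 / p) (Or.inl hψ.ne')
    have hval : p * t ^ (p - 1) / l2 * (l1 / p) * (c + t ^ p / l2) ^ (l1 / p - 1)
        = l1 / l2 * (t ^ (p - 1) * (c + t ^ p / l2) ^ (-(l2 / p))) := by
      have hexp : l1 / p - 1 = -(l2 / p) := by field_simp; ring
      rw [hexp]; field_simp
    rw [hval] at h2
    exact h2
  have key := (convex_Icc i (i + 1)).mul_sub_le_image_sub_of_le_deriv
    (f := f) (C := l1 / l2 * (i ^ (p - 1) * (c + i ^ p / l2) ^ (-(l2 / p))))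
    (fun t ht => ((hder t (by have h := ht.1; linarith)).continuousAt.continuousWithinAt))
    (fun t ht => by
      rw [interior_Icc] at ht
      exact ((hder t (by have := ht.1; linarith)).differentiableAt.differentiableWithinAt))
    (fun t ht => by
      rw [interior_Icc] at ht
      rw [(hder t (by have := ht.1; linarith)).deriv]
      exact mul_le_mul_of_nonneg_left
        (opial_d_mono l1 l2 c hl1 hl2 hc hi ht.1.le) (by positivity))
    i (Set.mem_Icc.mpr ⟨le_refl _, by linarith⟩) (i + 1) (Set.mem_Icc.mpr ⟨by linarith, le_refl _⟩) (by linarith)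
  simpa using key


lemma opial_holder (p : ℝ) (hp : 1 ≤ p) (i : ℕ) (a : ℕ → ℝ) (ha : ∀ j, 0 ≤ a j) :
    (∑ j ∈ Icc 1 i, a j) ^ p ≤ (i : ℝ) ^ (p - 1) * ∑ j ∈ Icc 1 i, a j ^ p := by
  rcases Nat.eq_zero_or_pos i with h0 | hpos
  · subst h0
    simp [Real.zero_rpow (by linarith : p ≠ 0)]
  · have hi0 : (0:ℝ) < i := by exact_mod_cast hpos
    have hS : (0:ℝ) ≤ ∑ j ∈ Icc 1 i, a j := Finset.sum_nonneg fun j _ => ha j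
    have hT : (0:ℝ) ≤ ∑ j ∈ Icc 1 i, a j ^ p :=
      Finset.sum_nonneg fun j _ => Real.rpow_nonneg (ha j) p
    have h := Real.rpow_arith_mean_le_arith_mean_rpow (Icc 1 i) (fun _ => 1/(i:ℝ)) a
      (fun _ _ => by positivity)
      (by rw [Finset.sum_const, Nat.card_Icc]; simp; field_simp)
      (fun j _ => ha j) hp
    rw [← Finset.mul_sum, Real.mul_rpow (by positivity) hS, one_div,
      Real.inv_rpow hi0.le] at h
    have hip : (0:ℝ) < (i:ℝ) ^ p := Real.rpow_pos_of_pos hi0 p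
    have hfin : (i:ℝ) ^ (p - 1) = (i:ℝ) ^ p / i := by
      rw [Real.rpow_sub hi0, Real.rpow_one]
    calc (∑ j ∈ Icc 1 i, a j) ^ p
        = (i:ℝ) ^ p * (((i:ℝ) ^ p)⁻¹ * (∑ j ∈ Icc 1 i, a j) ^ p) := by field_simp
      _ ≤ (i:ℝ) ^ p * (∑ j ∈ Icc 1 i, (fun _ : ℕ => ((i:ℝ))⁻¹) j * a j ^ p) :=
          mul_le_mul_of_nonneg_left h hip.le
      _ = (i:ℝ) ^ (p - 1) * ∑ j ∈ Icc 1 i, a j ^ p := by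
          simp only []
          rw [← Finset.mul_sum, hfin]
          field_simp

lemma opial_young (l1 l2 x y g : ℝ) (hl1 : 1 ≤ l1) (hl2 : 1 ≤ l2)
    (hx : 0 ≤ x) (hy : 0 ≤ y) (hg : 0 < g) :
    x ^ (l1/(l1+l2)) * y ^ (l2/(l1+l2))
      ≤ l1/(l1+l2) * (x * g) + l2/(l1+l2) * (y * g ^ (-(l1/l2))) := by
  have hp0 : (0:ℝ) < l1 + l2 := by linarith
  have h := Real.geom_mean_le_arith_mean2_weighted
    (w₁ := l1/(l1+l2)) (w₂ := l2/(l1+l2)) (p₁ := x*g) (p₂ := y * g^(-(l1/l2)))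
    (by positivity) (by positivity) (by positivity) (by positivity)
    (by field_simp)
  refine le_trans (le_of_eq ?_) h
  rw [Real.mul_rpow hx hg.le, Real.mul_rpow hy (by positivity),
    ← Real.rpow_mul hg.le]
  have hgg : g ^ (l1/(l1+l2)) * g ^ ((-(l1/l2))*(l2/(l1+l2))) = 1 := by
    rw [← Real.rpow_add hg]
    have : l1/(l1+l2) + (-(l1/l2))*(l2/(l1+l2)) = 0 := by field_simp; ring
    rw [this, Real.rpow_zero]
  calc x ^ (l1/(l1+l2)) * y ^ (l2/(l1+l2))
      = x ^ (l1/(l1+l2)) * y ^ (l2/(l1+l2))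
        * (g ^ (l1/(l1+l2)) * g ^ ((-(l1/l2))*(l2/(l1+l2)))) := by rw [hgg, mul_one]
    _ = x ^ (l1/(l1+l2)) * g ^ (l1/(l1+l2))
        * (y ^ (l2/(l1+l2)) * g ^ (-(l1/l2)*(l2/(l1+l2)))) := by ring

lemma opial_core (l1 l2 c : ℝ) (hl1 : 1 ≤ l1) (hl2 : 1 ≤ l2) (hc : 0 ≤ c)
    (a : ℕ → ℝ) (ha : ∀ j, 0 ≤ a j) (i : ℕ) (hi : 1 ≤ i) (y : ℝ) (hy : 0 ≤ y) :
    (∑ j ∈ Icc 1 i, a j) ^ l1 * y ^ l2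
      ≤ l2 / (l1 + l2) *
        (((c + ((i:ℝ) + 1) ^ (l1+l2) / l2) ^ (l1/(l1+l2))
            - (c + (i:ℝ) ^ (l1+l2) / l2) ^ (l1/(l1+l2)))
            * (∑ j ∈ Icc 1 i, a j ^ (l1+l2))
          + (c + (i:ℝ) ^ (l1+l2) / l2) ^ (l1/(l1+l2)) * y ^ (l1+l2)) := by
  set p := l1 + l2 with hp
  have hp0 : (0:ℝ) < p := by rw [hp]; linarith
  have hl20 : (0:ℝ) < l2 := by linarith
  have hi0 : (0:ℝ) < (i:ℝ) := by exact_mod_cast hi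
  have hi1 : (1:ℝ) ≤ (i:ℝ) := by exact_mod_cast hi
  have hS : (0:ℝ) ≤ ∑ j ∈ Icc 1 i, a j := Finset.sum_nonneg fun j _ => ha j
  have hB : (0:ℝ) ≤ ∑ j ∈ Icc 1 i, a j ^ p :=
    Finset.sum_nonneg fun j _ => Real.rpow_nonneg (ha j) p
  have hψ : (0:ℝ) < c + (i:ℝ) ^ p / l2 := by positivity
  set ψ := c + (i:ℝ) ^ p / l2 with hψdef
  set G := ψ ^ (l1/p) with hG
  set G' := (c + ((i:ℝ) + 1) ^ p / l2) ^ (l1/p) with hG'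
  set S := ∑ j ∈ Icc 1 i, a j with hSdef
  set B := ∑ j ∈ Icc 1 i, a j ^ p with hBdef
  -- step 1 : S ^ l1 ≤ (i^(p-1) * B) ^ (l1/p)
  have step1 : S ^ l1 ≤ ((i:ℝ) ^ (p-1) * B) ^ (l1/p) := by
    have h1 : S ^ l1 = (S ^ p) ^ (l1/p) := by
      rw [← Real.rpow_mul hS]
      congr 1
      field_simp
    rw [h1]
    exact Real.rpow_le_rpow (Real.rpow_nonneg hS p)
      (opial_holder p (by rw [hp]; linarith) i a ha) (by positivity)
  have hyl : y ^ l2 = (y ^ p) ^ (l2/p) := by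
    rw [← Real.rpow_mul hy]
    congr 1
    field_simp
  -- young with g = ψ ^ (-(l2/p))
  have hg : (0:ℝ) < ψ ^ (-(l2/p)) := Real.rpow_pos_of_pos hψ _
  have young := opial_young l1 l2 ((i:ℝ) ^ (p-1) * B) (y ^ p) (ψ ^ (-(l2/p))) hl1 hl2
    (by positivity) (Real.rpow_nonneg hy p) hg
  have hgg : (ψ ^ (-(l2/p))) ^ (-(l1/l2)) = G := by
    rw [← Real.rpow_mul hψ.le, hG]
    congr 1
    field_simp
  rw [hgg, ← hp] at young
  have main : S ^ l1 * y ^ l2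
      ≤ l1/p * ((i:ℝ) ^ (p-1) * B * ψ ^ (-(l2/p))) + l2/p * (y ^ p * G) := by
    calc S ^ l1 * y ^ l2
        ≤ ((i:ℝ) ^ (p-1) * B) ^ (l1/p) * (y ^ p) ^ (l2/p) := by
          rw [hyl]
          exact mul_le_mul_of_nonneg_right step1 (Real.rpow_nonneg (Real.rpow_nonneg hy p) _)
      _ ≤ _ := young
  -- G-step bound
  have gstep := opial_G_step l1 l2 c hl1 hl2 hc hi1
  rw [← hp, ← hψdef, ← hG, ← hG'] at gstep
  have bound1 : l1/p * ((i:ℝ) ^ (p-1) * B * ψ ^ (-(l2/p))) ≤ l2/p * ((G' - G) * B) := by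
    have h2 : l1/l2 * ((i:ℝ) ^ (p-1) * ψ ^ (-(l2/p))) * B ≤ (G' - G) * B :=
      mul_le_mul_of_nonneg_right gstep hB
    calc l1/p * ((i:ℝ) ^ (p-1) * B * ψ ^ (-(l2/p)))
        = l2/p * (l1/l2 * ((i:ℝ) ^ (p-1) * ψ ^ (-(l2/p))) * B) := by
          field_simp
      _ ≤ l2/p * ((G' - G) * B) := mul_le_mul_of_nonneg_left h2 (by positivity)
  calc S ^ l1 * y ^ l2
      ≤ l1/p * ((i:ℝ) ^ (p-1) * B * ψ ^ (-(l2/p))) + l2/p * (y ^ p * G) := main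
    _ ≤ l2/p * ((G' - G) * B) + l2/p * (y ^ p * G) := by linarith
    _ = l2/p * ((G' - G) * B + G * y ^ p) := by ring

lemma opial_telescope (F : ℕ → ℝ) (k : ℕ) :
    ∑ i ∈ Icc 1 k, (F i - F (i-1)) = F k - F 0 := by
  induction k with
  | zero => simp
  | succ n ih =>
    rw [Finset.sum_Icc_succ_top (by omega : 1 ≤ n + 1), ih]
    simp

lemma opial_one_sided (l1 l2 : ℝ) (hl1 : 1 ≤ l1) (hl2 : 1 ≤ l2) (k : ℕ)
    (a : ℕ → ℝ) (ha : ∀ j, 0 ≤ a j) :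
    ∑ i ∈ Icc 1 k, (∑ j ∈ Icc 1 i, a j) ^ l1 * a i ^ l2
      ≤ l2 * ((k:ℝ)+1) ^ l1 / (l1+l2) * ∑ i ∈ Icc 1 k, a i ^ (l1+l2) := by
  set p := l1 + l2 with hp
  have hp0 : (0:ℝ) < p := by rw [hp]; linarith
  have hl20 : (0:ℝ) < l2 := by linarith
  set K : ℝ := (k:ℝ) + 1 with hK
  have hK0 : (0:ℝ) < K := by positivity
  set c : ℝ := (1 - 1/l2) * K ^ p with hc
  have hc0 : (0:ℝ) ≤ c := by
    apply mul_nonneg _ (Real.rpow_nonneg hK0.le p)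
    have : 1/l2 ≤ 1 := by rw [div_le_one hl20]; exact hl2
    linarith
  set B : ℕ → ℝ := fun n => ∑ j ∈ Icc 1 n, a j ^ p with hB
  set G : ℕ → ℝ := fun n => (c + ((n:ℝ))^p / l2) ^ (l1/p) with hG
  set F : ℕ → ℝ := fun n => G (n+1) * B n with hF
  have key : ∀ i ∈ Icc 1 k, (∑ j ∈ Icc 1 i, a j) ^ l1 * a i ^ l2
      ≤ l2/p * (F i - F (i-1)) := by
    intro i hik
    have hi1 : 1 ≤ i := (Finset.mem_Icc.mp hik).1
    have hcore := opial_core l1 l2 c hl1 hl2 hc0 a ha i hi1 (a i) (ha i)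
    rw [← hp] at hcore
    have hGi1 : (c + ((i:ℝ) + 1) ^ p / l2) ^ (l1/p) = G (i+1) := by
      rw [hG]; push_cast; ring_nf
    have hGi : (c + ((i:ℝ)) ^ p / l2) ^ (l1/p) = G i := rfl
    have hBieq : (∑ j ∈ Icc 1 i, a j ^ p) = B i := rfl
    rw [hGi1, hGi, hBieq] at hcore
    refine hcore.trans (le_of_eq ?_)
    have hBi : B i = B (i-1) + a i ^ p := by
      rw [hB]
      simp only []
      conv_lhs => rw [show i = (i-1) + 1 by omega]
      rw [Finset.sum_Icc_succ_top (by omega : 1 ≤ (i-1) + 1)]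
      rw [show (i-1) + 1 = i by omega]
    have hFi1 : F i = G (i+1) * B i := rfl
    have hFi : F (i-1) = G i * B (i-1) := by
      rw [hF]
      simp only []
      rw [show (i-1) + 1 = i by omega]
    rw [hFi1, hFi, hBi]
    ring
  calc ∑ i ∈ Icc 1 k, (∑ j ∈ Icc 1 i, a j) ^ l1 * a i ^ l2
      ≤ ∑ i ∈ Icc 1 k, l2/p * (F i - F (i-1)) := Finset.sum_le_sum key
    _ = l2/p * (F k - F 0) := by rw [← Finset.mul_sum, opial_telescope]
    _ = l2 * K ^ l1 / p * B k := by
        have hF0 : F 0 = 0 := by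
          rw [hF, hB]; simp
        have hFk : F k = K ^ l1 * B k := by
          rw [hF]
          rw [hG]
          simp only []
          have h1 : c + (((k+1:ℕ)):ℝ) ^ p / l2 = K ^ p := by
            push_cast
            rw [hc, ← hK]
            field_simp
            ring
          rw [h1, ← Real.rpow_mul hK0.le]
          congr 1
          field_simp
        rw [hF0, hFk]
        ring
    _ = l2 * K ^ l1 / p * ∑ i ∈ Icc 1 k, a i ^ p := by rw [hB]

lemma opial_one_sided_shift (l1 l2 : ℝ) (hl1 : 1 ≤ l1) (hl2 : 1 ≤ l2) (k : ℕ)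
    (a : ℕ → ℝ) (ha : ∀ j, 0 ≤ a j) :
    ∑ i ∈ Icc 1 k, (∑ j ∈ Icc 1 i, a j) ^ l1 * a (i+1) ^ l2
      ≤ l2 * ((k:ℝ)+1) ^ l1 / (l1+l2) * ∑ i ∈ Icc 1 (k+1), a i ^ (l1+l2) := by
  set p := l1 + l2 with hp
  have hp0 : (0:ℝ) < p := by rw [hp]; linarith
  have hl20 : (0:ℝ) < l2 := by linarith
  set K : ℝ := (k:ℝ) + 1 with hK
  have hK0 : (0:ℝ) < K := by positivity
  set c : ℝ := (1 - 1/l2) * K ^ p with hc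
  have hc0 : (0:ℝ) ≤ c := by
    apply mul_nonneg _ (Real.rpow_nonneg hK0.le p)
    have : 1/l2 ≤ 1 := by rw [div_le_one hl20]; exact hl2
    linarith
  set B : ℕ → ℝ := fun n => ∑ j ∈ Icc 1 n, a j ^ p with hB
  set G : ℕ → ℝ := fun n => (c + ((n:ℝ))^p / l2) ^ (l1/p) with hG
  set F : ℕ → ℝ := fun n => G (n+1) * B (n+1) with hF
  have hGnn : ∀ n, 0 ≤ G n := fun n => Real.rpow_nonneg (by positivity) _
  have hBnn : ∀ n, 0 ≤ B n :=
    fun n => Finset.sum_nonneg fun j _ => Real.rpow_nonneg (ha j) p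
  have hGmono : ∀ n : ℕ, G n ≤ G (n+1) := by
    intro n
    rw [hG]
    simp only []
    apply Real.rpow_le_rpow (by positivity) _ (by positivity)
    push_cast
    gcongr
    linarith
  have hBstep : ∀ n : ℕ, B (n+1) = B n + a (n+1) ^ p := by
    intro n
    rw [hB]
    simp only []
    rw [Finset.sum_Icc_succ_top (by omega : 1 ≤ n + 1)]
  have key : ∀ i ∈ Icc 1 k, (∑ j ∈ Icc 1 i, a j) ^ l1 * a (i+1) ^ l2
      ≤ l2/p * (F i - F (i-1)) := by
    intro i hik
    have hi1 : 1 ≤ i := (Finset.mem_Icc.mp hik).1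
    have hcore := opial_core l1 l2 c hl1 hl2 hc0 a ha i hi1 (a (i+1)) (ha (i+1))
    rw [← hp] at hcore
    have hGi1 : (c + ((i:ℝ) + 1) ^ p / l2) ^ (l1/p) = G (i+1) := by
      rw [hG]; push_cast; ring_nf
    have hGi : (c + ((i:ℝ)) ^ p / l2) ^ (l1/p) = G i := rfl
    have hBieq : (∑ j ∈ Icc 1 i, a j ^ p) = B i := rfl
    rw [hGi1, hGi, hBieq] at hcore
    refine hcore.trans ?_
    have hFi1 : F i = G (i+1) * B (i+1) := rfl
    have hFi : F (i-1) = G i * B i := by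
      rw [hF]
      simp only []
      rw [show (i-1) + 1 = i by omega]
    rw [hFi1, hFi, hBstep i]
    have hmono1 := hGmono i
    have h2 : (0:ℝ) ≤ a (i+1) ^ p := Real.rpow_nonneg (ha (i+1)) p
    have h3 := hBnn i
    have expand : l2/p * (G (i+1) * (B i + a (i+1) ^ p) - G i * B i)
        = l2/p * ((G (i+1) - G i) * B i + G i * a (i+1) ^ p)
          + l2/p * ((G (i+1) - G i) * a (i+1) ^ p) := by ring
    rw [expand]
    have : 0 ≤ l2/p * ((G (i+1) - G i) * a (i+1) ^ p) := by
      apply mul_nonneg (by positivity)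
      exact mul_nonneg (by linarith) h2
    linarith
  calc ∑ i ∈ Icc 1 k, (∑ j ∈ Icc 1 i, a j) ^ l1 * a (i+1) ^ l2
      ≤ ∑ i ∈ Icc 1 k, l2/p * (F i - F (i-1)) := Finset.sum_le_sum key
    _ = l2/p * (F k - F 0) := by rw [← Finset.mul_sum, opial_telescope]
    _ ≤ l2/p * F k := by
        have hF0 : F 0 = G 1 * B 1 := rfl
        have : 0 ≤ F 0 := by rw [hF0]; exact mul_nonneg (hGnn 1) (hBnn 1)
        have hcoeff : (0:ℝ) ≤ l2/p := by positivity
        nlinarith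
    _ = l2 * K ^ l1 / p * ∑ i ∈ Icc 1 (k+1), a i ^ p := by
        have hFk : F k = K ^ l1 * B (k+1) := by
          rw [hF]
          rw [hG]
          simp only []
          have h1 : c + (((k+1:ℕ)):ℝ) ^ p / l2 = K ^ p := by
            push_cast
            rw [hc, ← hK]
            field_simp
            ring
          rw [h1, ← Real.rpow_mul hK0.le]
          congr 1
          field_simp
        rw [hFk, hB]
        simp only []
        ring

lemma opial_Icc_split (x y z : ℕ) (hxy : x ≤ y) (hyz : y ≤ z) (f : ℕ → ℝ) :
    ∑ i ∈ Icc (x+1) z, f i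
      = (∑ i ∈ Icc (x+1) y, f i) + ∑ i ∈ Icc (y+1) z, f i := by
  have e : Finset.Icc (x+1) z = Finset.Icc (x+1) y ∪ Finset.Icc (y+1) z := by
    ext w; simp only [Finset.mem_Icc, Finset.mem_union]; omega
  have hd : Disjoint (Finset.Icc (x+1) y) (Finset.Icc (y+1) z) := by
    rw [Finset.disjoint_left]
    intro w hw hw'
    simp only [Finset.mem_Icc] at hw hw'
    omega
  rw [e, Finset.sum_union hd]

theorem discrete_opial_two_sided (m : ℕ) (u : ℕ → ℝ) (l1 l2 : ℝ)
    (hl1 : 1 ≤ l1) (hl2 : 1 ≤ l2)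
    (h0 : u 0 = 0) (hm : u m = 0) :
    ∑ i ∈ Finset.Icc 1 (m - 1), |u i| ^ l1 * |u i - u (i - 1)| ^ l2
      ≤ (l2 * ((m / 2 : ℕ) + 1 : ℝ) ^ l1) / (l1 + l2) *
        ∑ i ∈ Finset.Icc 1 m, |u i - u (i - 1)| ^ (l1 + l2) := by
  have hl20 : (0:ℝ) < l2 := by linarith
  have hp0 : (0:ℝ) < l1 + l2 := by linarith
  have hRnn : ∀ s : Finset ℕ, (0:ℝ) ≤ ∑ i ∈ s, |u i - u (i-1)| ^ (l1 + l2) :=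
    fun s => Finset.sum_nonneg fun i _ => Real.rpow_nonneg (abs_nonneg _) _
  have hCnn : (0:ℝ) ≤ (l2 * ((m / 2 : ℕ) + 1 : ℝ) ^ l1) / (l1 + l2) := by positivity
  rcases le_or_gt m 1 with hm1 | hm1
  · have h1 : m - 1 = 0 := by omega
    rw [h1]
    have h2 : (Finset.Icc 1 0 : Finset ℕ) = ∅ := by simp
    rw [h2, Finset.sum_empty]
    exact mul_nonneg hCnn (hRnn _)
  set k := m / 2 with hk
  have hk2 : k = m / 2 := hk
  have hk1 : 1 ≤ k := by omega
  have hkm : k ≤ m - 1 := by omega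
  -- telescoping upper bounds for |u i|
  have hub : ∀ i : ℕ, |u i| ≤ ∑ j ∈ Icc 1 i, |u j - u (j-1)| := by
    intro i
    have ht := opial_telescope u i
    calc |u i| = |∑ j ∈ Icc 1 i, (u j - u (j-1))| := by rw [ht, h0, sub_zero]
      _ ≤ ∑ j ∈ Icc 1 i, |u j - u (j-1)| := Finset.abs_sum_le_sum_abs _ _
  have hub2 : ∀ i : ℕ, i ≤ m → |u i| ≤ ∑ j ∈ Icc (i+1) m, |u j - u (j-1)| := by
    intro i him
    have h1 := opial_telescope u i
    have h2 := opial_telescope u m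
    have hs : (∑ j ∈ Icc 1 m, (u j - u (j-1)))
        = (∑ j ∈ Icc 1 i, (u j - u (j-1))) + ∑ j ∈ Icc (i+1) m, (u j - u (j-1)) := by
      have := opial_Icc_split 0 i m (by omega) him (fun j => u j - u (j-1))
      simpa using this
    rw [h1, h2, hm, h0] at hs
    have hX : ∑ j ∈ Icc (i+1) m, (u j - u (j-1)) = - u i := by linarith
    calc |u i| = |∑ j ∈ Icc (i+1) m, (u j - u (j-1))| := by rw [hX, abs_neg]
      _ ≤ ∑ j ∈ Icc (i+1) m, |u j - u (j-1)| := Finset.abs_sum_le_sum_abs _ _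
  -- left part
  have hleft : ∑ i ∈ Icc 1 k, |u i| ^ l1 * |u i - u (i-1)| ^ l2
      ≤ l2 * ((k:ℝ)+1) ^ l1 / (l1+l2) * ∑ i ∈ Icc 1 k, |u i - u (i-1)| ^ (l1+l2) := by
    have hos := opial_one_sided l1 l2 hl1 hl2 k (fun j => |u j - u (j-1)|)
      (fun j => abs_nonneg _)
    refine le_trans (Finset.sum_le_sum ?_) hos
    intro i hi
    exact mul_le_mul_of_nonneg_right
      (Real.rpow_le_rpow (abs_nonneg _) (hub i) (by linarith))
      (Real.rpow_nonneg (abs_nonneg _) l2)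
  -- right part
  set q := m - 1 - k with hqdef
  have hq2 : q = m - 1 - k := hqdef
  have hshift := opial_one_sided_shift l1 l2 hl1 hl2 q
    (fun r => |u (m+1-r) - u (m+1-r-1)|) (fun r => abs_nonneg _)
  beta_reduce at hshift
  have hre1 : ∑ i ∈ Icc (k+1) (m-1),
        (∑ j ∈ Icc (i+1) m, |u j - u (j-1)|) ^ l1 * |u i - u (i-1)| ^ l2
      = ∑ r ∈ Icc 1 q,
        (∑ j ∈ Icc 1 r, |u (m+1-j) - u (m+1-j-1)|) ^ l1
          * |u (m+1-(r+1)) - u (m+1-(r+1)-1)| ^ l2 := by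
    refine Finset.sum_nbij' (fun i => m - i) (fun r => m - r) ?_ ?_ ?_ ?_ ?_
    · intro i hi; simp only [Finset.mem_Icc] at hi; simp only [Finset.mem_Icc]; omega
    · intro r hr; simp only [Finset.mem_Icc] at hr; simp only [Finset.mem_Icc]; omega
    · intro i hi; simp only [Finset.mem_Icc] at hi; omega
    · intro r hr; simp only [Finset.mem_Icc] at hr; omega
    · intro i hi
      simp only [Finset.mem_Icc] at hi
      have hinner : ∑ j ∈ Icc (i+1) m, |u j - u (j-1)|
          = ∑ j ∈ Icc 1 (m-i), |u (m+1-j) - u (m+1-j-1)| := by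
        refine Finset.sum_nbij' (fun j => m + 1 - j) (fun j => m + 1 - j) ?_ ?_ ?_ ?_ ?_
        · intro j hj; simp only [Finset.mem_Icc] at hj; simp only [Finset.mem_Icc]; omega
        · intro j hj; simp only [Finset.mem_Icc] at hj; simp only [Finset.mem_Icc]; omega
        · intro j hj; simp only [Finset.mem_Icc] at hj; omega
        · intro j hj; simp only [Finset.mem_Icc] at hj; omega
        · intro j hj
          simp only [Finset.mem_Icc] at hj
          have e1 : m + 1 - (m + 1 - j) = j := by omega
          rw [e1]
      have e3 : m + 1 - (m - i + 1) = i := by omega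
      rw [hinner, e3]
  have hre2 : ∑ r ∈ Icc 1 (q+1), |u (m+1-r) - u (m+1-r-1)| ^ (l1+l2)
      = ∑ j ∈ Icc (k+1) m, |u j - u (j-1)| ^ (l1+l2) := by
    refine Finset.sum_nbij' (fun r => m + 1 - r) (fun j => m + 1 - j) ?_ ?_ ?_ ?_ ?_
    · intro r hr; simp only [Finset.mem_Icc] at hr; simp only [Finset.mem_Icc]; omega
    · intro j hj; simp only [Finset.mem_Icc] at hj; simp only [Finset.mem_Icc]; omega
    · intro r hr; simp only [Finset.mem_Icc] at hr; omega
    · intro j hj; simp only [Finset.mem_Icc] at hj; omega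
    · intro r hr
      dsimp only
  have hq1 : ((q:ℝ)+1) ≤ ((k:ℝ)+1) := by
    have : q + 1 ≤ k + 1 := by omega
    exact_mod_cast this
  have hcoef : l2 * ((q:ℝ)+1) ^ l1 / (l1+l2) ≤ l2 * ((k:ℝ)+1) ^ l1 / (l1+l2) := by
    gcongr
  have hright : ∑ i ∈ Icc (k+1) (m-1), |u i| ^ l1 * |u i - u (i-1)| ^ l2
      ≤ l2 * ((k:ℝ)+1) ^ l1 / (l1+l2) * ∑ j ∈ Icc (k+1) m, |u j - u (j-1)| ^ (l1+l2) := by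
    calc ∑ i ∈ Icc (k+1) (m-1), |u i| ^ l1 * |u i - u (i-1)| ^ l2
        ≤ ∑ i ∈ Icc (k+1) (m-1),
            (∑ j ∈ Icc (i+1) m, |u j - u (j-1)|) ^ l1 * |u i - u (i-1)| ^ l2 := by
          apply Finset.sum_le_sum
          intro i hi
          simp only [Finset.mem_Icc] at hi
          exact mul_le_mul_of_nonneg_right
            (Real.rpow_le_rpow (abs_nonneg _) (hub2 i (by omega)) (by linarith))
            (Real.rpow_nonneg (abs_nonneg _) l2)
      _ = ∑ r ∈ Icc 1 q,
            (∑ j ∈ Icc 1 r, |u (m+1-j) - u (m+1-j-1)|) ^ l1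
              * |u (m+1-(r+1)) - u (m+1-(r+1)-1)| ^ l2 := hre1
      _ ≤ l2 * ((q:ℝ)+1) ^ l1 / (l1+l2)
            * ∑ r ∈ Icc 1 (q+1), |u (m+1-r) - u (m+1-r-1)| ^ (l1+l2) := hshift
      _ = l2 * ((q:ℝ)+1) ^ l1 / (l1+l2)
            * ∑ j ∈ Icc (k+1) m, |u j - u (j-1)| ^ (l1+l2) := by rw [hre2]
      _ ≤ _ := mul_le_mul_of_nonneg_right hcoef (hRnn _)
  -- combine
  have hLsplit : ∑ i ∈ Icc 1 (m-1), |u i| ^ l1 * |u i - u (i-1)| ^ l2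
      = (∑ i ∈ Icc 1 k, |u i| ^ l1 * |u i - u (i-1)| ^ l2)
        + ∑ i ∈ Icc (k+1) (m-1), |u i| ^ l1 * |u i - u (i-1)| ^ l2 := by
    have := opial_Icc_split 0 k (m-1) (by omega) hkm
      (fun i => |u i| ^ l1 * |u i - u (i-1)| ^ l2)
    simpa using this
  have hRsplit : ∑ i ∈ Icc 1 m, |u i - u (i-1)| ^ (l1+l2)
      = (∑ i ∈ Icc 1 k, |u i - u (i-1)| ^ (l1+l2))
        + ∑ i ∈ Icc (k+1) m, |u i - u (i-1)| ^ (l1+l2) := by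
    have := opial_Icc_split 0 k m (by omega) (by omega)
      (fun i => |u i - u (i-1)| ^ (l1+l2))
    simpa using this
  rw [hLsplit, hRsplit, mul_add]
  exact add_le_add hleft hright
end

section
/- Let $\{u_i\}_{i=0}^{n}$ be a sequence of real numbers with $u_0 = 0$ and $u_n = 0$. Then $\sum_{i=1}^{n-1} |u_i (u_{i+1} - u_i)| \leq \frac{1}{2}\left\lfloor \frac{n+1}{2} \right\rfloor \sum_{i=0}^{n-1} (u_{i+1} - u_i)^2$. -/
open Finset

/-- Termwise AM–GM: `(∑ a k) * c ≤ (card/2) c² + (1/2) ∑ a k²`. -/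
lemma opial_amgm_sum (a : ℕ → ℝ) (s : Finset ℕ) (c : ℝ) :
    (∑ k ∈ s, a k) * c ≤ (s.card : ℝ) / 2 * c ^ 2 + 1 / 2 * ∑ k ∈ s, (a k) ^ 2 := by
  rw [Finset.sum_mul]
  have h : ∑ k ∈ s, a k * c ≤ ∑ k ∈ s, ((a k) ^ 2 + c ^ 2) / 2 := by
    apply Finset.sum_le_sum
    intro k _
    nlinarith [sq_nonneg (a k - c)]
  have h2 : ∑ k ∈ s, ((a k) ^ 2 + c ^ 2) / 2
      = (s.card : ℝ) / 2 * c ^ 2 + 1 / 2 * ∑ k ∈ s, (a k) ^ 2 := by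
    simp only [add_div]
    rw [Finset.sum_add_distrib, ← Finset.sum_div, Finset.sum_const, nsmul_eq_mul]
    ring
  linarith

/-- Front half bound. -/
lemma opial_front (a : ℕ → ℝ) (h : ℕ) :
    ∑ i ∈ range (h + 1), (∑ k ∈ range i, a k) * a i
      ≤ (h : ℝ) / 2 * ∑ k ∈ range (h + 1), (a k) ^ 2 := by
  induction h with
  | zero => simp
  | succ h ih =>
    rw [Finset.sum_range_succ]
    have key := opial_amgm_sum a (range (h + 1)) (a (h + 1))
    rw [Finset.sum_range_succ (fun k => (a k) ^ 2) (h + 1)]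
    simp only [Finset.card_range] at key
    push_cast at key ⊢
    nlinarith [ih]

/-- Tail bound (diagonal included). -/
lemma opial_tail (a : ℕ → ℝ) : ∀ (m s : ℕ),
    ∑ i ∈ Ico s (s + m), (∑ k ∈ Ico i (s + m), a k) * a i
      ≤ ((m : ℝ) + 1) / 2 * ∑ k ∈ Ico s (s + m), (a k) ^ 2 := by
  intro m
  induction m with
  | zero => simp
  | succ m ih =>
    intro s
    have hlt : s < s + (m + 1) := by omega
    rw [Finset.sum_eq_sum_Ico_succ_bot hlt,
        Finset.sum_eq_sum_Ico_succ_bot hlt (f := fun k => (a k) ^ 2),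
        Finset.sum_eq_sum_Ico_succ_bot hlt (f := a)]
    have e : s + (m + 1) = (s + 1) + m := by omega
    rw [e]
    have key := opial_amgm_sum a (Ico (s + 1) (s + 1 + m)) (a s)
    have hcard : ((Ico (s + 1) (s + 1 + m)).card : ℝ) = m := by
      rw [Nat.card_Ico]; congr 1; omega
    rw [hcard] at key
    have ihs := ih (s + 1)
    push_cast
    nlinarith [ihs]

theorem classical_discrete_opial (n : ℕ) (u : ℕ → ℝ)
    (h0 : u 0 = 0) (hn : u n = 0) :
    ∑ i ∈ Finset.Icc 1 (n - 1), |u i * (u (i + 1) - u i)|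
      ≤ (1 / 2 : ℝ) * (((n + 1) / 2 : ℕ) : ℝ) *
        ∑ i ∈ Finset.range n, (u (i + 1) - u i) ^ 2 := by
  set a : ℕ → ℝ := fun i => |u (i + 1) - u i| with ha
  have ha_nonneg : ∀ i, 0 ≤ a i := fun i => abs_nonneg _
  have hsq : ∀ i, (a i) ^ 2 = (u (i + 1) - u i) ^ 2 := fun i => sq_abs _
  rcases Nat.lt_or_ge n 2 with h2 | h2
  · interval_cases n <;> simp_all
  -- n ≥ 2
  set h : ℕ := n / 2 with hh
  set m : ℕ := n - h - 1 with hm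
  have hhn : h ≤ n - 1 := by omega
  have hmn : (h + 1) + m = n := by omega
  have hK : m + 1 = (n + 1) / 2 := by omega
  have hhK : h ≤ (n + 1) / 2 := by omega
  -- bound |u i| from the left
  have hub1 : ∀ i, |u i| ≤ ∑ k ∈ range i, a k := by
    intro i
    have : u i = ∑ k ∈ range i, (u (k + 1) - u k) := by
      rw [Finset.sum_range_sub, h0, sub_zero]
    rw [this]
    exact Finset.abs_sum_le_sum_abs _ _
  -- bound |u i| from the right
  have hub2 : ∀ i, i ≤ n → |u i| ≤ ∑ k ∈ Ico i n, a k := by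
    intro i hi
    have hsum : ∑ k ∈ Ico i n, (u (k + 1) - u k) = -u i := by
      rw [Finset.sum_Ico_eq_sub _ hi, Finset.sum_range_sub, Finset.sum_range_sub, hn]
      ring
    have : |u i| = |∑ k ∈ Ico i n, (u (k + 1) - u k)| := by
      rw [hsum, abs_neg]
    rw [this]
    exact Finset.abs_sum_le_sum_abs _ _
  -- rewrite LHS
  have hLHS : ∑ i ∈ Finset.Icc 1 (n - 1), |u i * (u (i + 1) - u i)|
      = ∑ i ∈ Ioc 0 h, |u i| * a i + ∑ i ∈ Ioc h (n - 1), |u i| * a i := by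
    rw [Finset.sum_Ioc_consecutive _ (Nat.zero_le h) hhn]
    rw [← Finset.Icc_add_one_left_eq_Ioc]
    exact Finset.sum_congr rfl fun i _ => abs_mul _ _
  rw [hLHS]
  -- front part
  have hfront : ∑ i ∈ Ioc 0 h, |u i| * a i
      ≤ (h : ℝ) / 2 * ∑ k ∈ range (h + 1), (a k) ^ 2 := by
    calc ∑ i ∈ Ioc 0 h, |u i| * a i
        ≤ ∑ i ∈ Ioc 0 h, (∑ k ∈ range i, a k) * a i := by
          apply Finset.sum_le_sum
          intro i _
          exact mul_le_mul_of_nonneg_right (hub1 i) (ha_nonneg i)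
      _ ≤ ∑ i ∈ range (h + 1), (∑ k ∈ range i, a k) * a i := by
          apply Finset.sum_le_sum_of_subset_of_nonneg
          · intro i hi
            simp only [Finset.mem_Ioc] at hi
            simp only [Finset.mem_range]
            omega
          · intro i _ _
            exact mul_nonneg (Finset.sum_nonneg fun k _ => ha_nonneg k) (ha_nonneg i)
      _ ≤ (h : ℝ) / 2 * ∑ k ∈ range (h + 1), (a k) ^ 2 := opial_front a h
  -- tail part
  have htail : ∑ i ∈ Ioc h (n - 1), |u i| * a i
      ≤ ((m : ℝ) + 1) / 2 * ∑ k ∈ Ico (h + 1) n, (a k) ^ 2 := by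
    have hIoc : Ioc h (n - 1) = Ico (h + 1) n := by
      rw [← Finset.Icc_add_one_left_eq_Ioc, ← Finset.Ico_add_one_right_eq_Icc]
      congr 1
      omega
    rw [hIoc]
    calc ∑ i ∈ Ico (h + 1) n, |u i| * a i
        ≤ ∑ i ∈ Ico (h + 1) n, (∑ k ∈ Ico i n, a k) * a i := by
          apply Finset.sum_le_sum
          intro i hi
          simp only [Finset.mem_Ico] at hi
          exact mul_le_mul_of_nonneg_right (hub2 i (le_of_lt hi.2)) (ha_nonneg i)
      _ ≤ ((m : ℝ) + 1) / 2 * ∑ k ∈ Ico (h + 1) n, (a k) ^ 2 := by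
          have := opial_tail a m (h + 1)
          rw [hmn] at this
          exact this
  -- combine
  have hsplit : ∑ k ∈ range (h + 1), (a k) ^ 2 + ∑ k ∈ Ico (h + 1) n, (a k) ^ 2
      = ∑ k ∈ range n, (a k) ^ 2 := by
    rw [Finset.range_eq_Ico, Finset.range_eq_Ico]
    exact Finset.sum_Ico_consecutive (fun k => (a k) ^ 2) (Nat.zero_le _) (by omega)
  have hS1 : (0 : ℝ) ≤ ∑ k ∈ range (h + 1), (a k) ^ 2 :=
    Finset.sum_nonneg fun k _ => sq_nonneg _
  have hS2 : (0 : ℝ) ≤ ∑ k ∈ Ico (h + 1) n, (a k) ^ 2 :=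
    Finset.sum_nonneg fun k _ => sq_nonneg _
  have hRHS : ∑ i ∈ Finset.range n, (u (i + 1) - u i) ^ 2 = ∑ k ∈ range n, (a k) ^ 2 :=
    Finset.sum_congr rfl fun i _ => (hsq i).symm
  rw [hRHS, ← hsplit]
  have hKcast : ((m : ℝ) + 1) = (((n + 1) / 2 : ℕ) : ℝ) := by
    rw [← hK]; push_cast; ring
  have hhcast : (h : ℝ) ≤ (((n + 1) / 2 : ℕ) : ℝ) := by
    exact_mod_cast hhK
  nlinarith [hfront, htail]
end
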